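/- arXiv:0904.3181 — 5 statements merged into one kernel-verified Lean document; each statement's English description precedes it below -/
import Mathlib

section
/- Let K be a field of characteristic 0. The Lie algebra L1 over K is generated by e_1 and e_2, its lower central series satisfies C^i L1 = span{e_j : j ≥ i + 1} for all i ≥ 2 (and C^1 L1 = L1), and consequently L1 is residually nilpotent of maximal class: dim(C^1 L1 / C^2 L1) = 2, dim(C^i L1 / C^{i+1} L1) = 1 for all i ≥ 2, and ∩_{i≥1} C^i L1 = 0. -/
/-- The quotient `C^i g / C^{i+1} g` of consecutive terms of the lower central series
(`C^1 g = g`, `C^{k+1} g = [g, C^k g]`, so `C^k g = LieModule.lowerCentralSeries K g g (k-1)`). -/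
abbrev lcsQuot (K g : Type*) [Field K] [LieRing g] [LieAlgebra K g] (i : ℕ) : Type _ :=
  ↥(LieSubmodule.toSubmodule (LieModule.lowerCentralSeries K g g (i - 1))) ⧸
    (Submodule.comap
      (LieSubmodule.toSubmodule (LieModule.lowerCentralSeries K g g (i - 1))).subtype
      (LieSubmodule.toSubmodule (LieModule.lowerCentralSeries K g g i)))

section Aux

variable {K g : Type*} [Field K] [CharZero K] [LieRing g] [LieAlgebra K g]
  (e : Module.Basis ℕ+ K g)

/-- bilinearity reduction: brackets with elements of a span of basis vectors. -/
private lemma lie_mem_span_aux (s : Set ℕ+) (P : Submodule K g)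
    (h : ∀ i : ℕ+, ∀ j ∈ s, ⁅e i, e j⁆ ∈ P)
    (x : g) {y : g} (hy : y ∈ Submodule.span K (e '' s)) : ⁅x, y⁆ ∈ P := by
  induction hy using Submodule.span_induction with
  | mem z hz =>
      obtain ⟨j, hj, rfl⟩ := hz
      have hx : x ∈ Submodule.span K (Set.range e) := by rw [e.span_eq]; trivial
      induction hx using Submodule.span_induction with
      | mem w hw => obtain ⟨i, rfl⟩ := hw; exact h i j hj
      | zero => rw [zero_lie]; exact P.zero_mem
      | add a b _ _ ha hb => rw [add_lie]; exact P.add_mem ha hb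
      | smul c a _ ha => rw [smul_lie]; exact P.smul_mem c ha
  | zero => rw [lie_zero]; exact P.zero_mem
  | add a b _ _ ha hb => rw [lie_add]; exact P.add_mem ha hb
  | smul c a _ ha => rw [lie_smul]; exact P.smul_mem c ha

variable (hrel : ∀ i j : ℕ+, ⁅e i, e j⁆ = (((j : ℕ) : K) - ((i : ℕ) : K)) • e (i + j))

include hrel

/-- The span of the basis vectors `e j` with `j ≥ n`, as a Lie submodule (ideal). -/
private def SpL (n : ℕ) : LieSubmodule K g g where
  __ := Submodule.span K (e '' {j : ℕ+ | n ≤ (j : ℕ)})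
  lie_mem := by
    intro x m hm
    refine lie_mem_span_aux e _ _ (fun i j hj => ?_) x hm
    rw [hrel]
    refine Submodule.smul_mem _ _ (Submodule.subset_span ⟨i + j, ?_, rfl⟩)
    have : (n : ℕ) ≤ (j : ℕ) := hj
    simp only [Set.mem_setOf_eq, PNat.add_coe]
    omega

private lemma SpL_toSubmodule (n : ℕ) :
    LieSubmodule.toSubmodule (SpL e hrel n) =
      Submodule.span K (e '' {j : ℕ+ | n ≤ (j : ℕ)}) := rfl

private lemma e_mem_SpL {n : ℕ} {j : ℕ+} (hj : n ≤ (j : ℕ)) : e j ∈ SpL e hrel n :=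
  Submodule.subset_span ⟨j, hj, rfl⟩

/-- Producing basis vectors downward: if all `e j`, `j ≥ n ≥ 2`, lie in `N`,
then `e j ∈ ⁅⊤, N⁆` for `j ≥ n + 1`. -/
private lemma e_mem_lie_top (N : LieSubmodule K g g) (n : ℕ) (hn : 2 ≤ n)
    (hN : ∀ j : ℕ+, n ≤ (j : ℕ) → e j ∈ N) {j : ℕ+} (hj : n + 1 ≤ (j : ℕ)) :
    e j ∈ ⁅(⊤ : LieIdeal K g), N⁆ := by
  set j' : ℕ+ := ⟨(j : ℕ) - 1, by omega⟩ with hj'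
  have hjc : ((j' : ℕ) : ℕ) = (j : ℕ) - 1 := rfl
  have hsum : (1 : ℕ+) + j' = j := by
    apply PNat.coe_injective
    simp only [PNat.add_coe, PNat.one_coe, hjc]
    omega
  have hb := hrel 1 j'
  rw [hsum] at hb
  have hc : (((j' : ℕ) : K) - (((1 : ℕ+) : ℕ) : K)) ≠ 0 := by
    have h1 : (j' : ℕ) ≠ 1 := by simp only [hjc]; omega
    simp only [PNat.one_coe, Nat.cast_one, sub_ne_zero]
    exact_mod_cast h1
  have hmem : ⁅e 1, e j'⁆ ∈ ⁅(⊤ : LieIdeal K g), N⁆ :=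
    LieSubmodule.lie_mem_lie (LieSubmodule.mem_top _) (hN j' (by omega))
  have : e j = (((j' : ℕ) : K) - (((1 : ℕ+) : ℕ) : K))⁻¹ • ⁅e 1, e j'⁆ := by
    rw [hb, smul_smul, inv_mul_cancel₀ hc, one_smul]
  rw [this]
  exact Submodule.smul_mem _ _ hmem

/-- The key computation of the lower central series. -/
private lemma lcs_eq : ∀ m : ℕ, 1 ≤ m →
    LieModule.lowerCentralSeries K g g m = SpL e hrel (m + 2) := by
  intro m hm
  obtain ⟨k, rfl⟩ : ∃ k, m = k + 1 := ⟨m - 1, by omega⟩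
  induction k with
  | zero =>
      apply le_antisymm
      · rw [LieModule.lowerCentralSeries_succ]
        rw [LieSubmodule.lie_le_iff]
        intro x _ y _
        have hy : y ∈ Submodule.span K (e '' (Set.univ : Set ℕ+)) := by
          rw [Set.image_univ, e.span_eq]; trivial
        refine lie_mem_span_aux e _ _ (fun a b _ => ?_) x hy
        rw [hrel]
        rcases le_or_gt 3 ((a : ℕ) + (b : ℕ)) with h3 | h3
        · refine Submodule.smul_mem _ _ (Submodule.subset_span ⟨a + b, ?_, rfl⟩)
          simp only [Set.mem_setOf_eq, PNat.add_coe]; omega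
        · have ha : (a : ℕ) = 1 := by have := a.pos; have := b.pos; omega
          have hb : (b : ℕ) = 1 := by have := a.pos; have := b.pos; omega
          rw [ha, hb, sub_self, zero_smul]
          exact Submodule.zero_mem _
      · rw [LieModule.lowerCentralSeries_succ, ← LieSubmodule.toSubmodule_le_toSubmodule,
          SpL_toSubmodule]
        rw [Submodule.span_le]
        rintro z ⟨j, hj, rfl⟩
        exact e_mem_lie_top e hrel ⊤ 2 le_rfl (fun _ _ => LieSubmodule.mem_top _) hj
  | succ k ih =>
      rw [LieModule.lowerCentralSeries_succ, ih (by omega)]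
      apply le_antisymm
      · rw [LieSubmodule.lie_le_iff]
        intro x _ y hy
        refine lie_mem_span_aux e _ _ (fun a b hb => ?_) x hy
        rw [hrel]
        refine Submodule.smul_mem _ _ (Submodule.subset_span ⟨a + b, ?_, rfl⟩)
        have hb' : (k + 1 + 2 : ℕ) ≤ (b : ℕ) := hb
        have := a.pos
        simp only [Set.mem_setOf_eq, PNat.add_coe]
        omega
      · rw [← LieSubmodule.toSubmodule_le_toSubmodule, SpL_toSubmodule, Submodule.span_le]
        rintro z ⟨j, hj, rfl⟩
        exact e_mem_lie_top e hrel _ (k + 3) (by omega)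
          (fun j' hj' => e_mem_SpL e hrel hj') (by simp at hj; omega)

end Aux

/-- Let `K` be a field of characteristic 0.  The Lie algebra `L1` over `K`
— presented here as any Lie algebra `g` with a basis `e 1, e 2, …` satisfying
`⁅e i, e j⁆ = (j - i) • e (i+j)` — is generated by `e 1` and `e 2`, its lower central
series satisfies `C^1 L1 = L1` and `C^i L1 = span {e j : j ≥ i+1}` for all `i ≥ 2`, and
consequently `L1` is residually nilpotent of maximal class:
`dim (C^1 L1 / C^2 L1) = 2`, `dim (C^i L1 / C^{i+1} L1) = 1` for all `i ≥ 2`, and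
`∩_{i ≥ 1} C^i L1 = 0`. -/
theorem L1_maximal_class (K g : Type*) [Field K] [CharZero K]
    [LieRing g] [LieAlgebra K g]
    (e : Module.Basis ℕ+ K g)
    (hrel : ∀ i j : ℕ+, ⁅e i, e j⁆ = (((j : ℕ) : K) - ((i : ℕ) : K)) • e (i + j)) :
    LieSubalgebra.lieSpan K g {e 1, e 2} = ⊤ ∧
    LieModule.lowerCentralSeries K g g 0 = ⊤ ∧
    (∀ i : ℕ, 2 ≤ i →
      LieSubmodule.toSubmodule (LieModule.lowerCentralSeries K g g (i - 1)) =
        Submodule.span K {x : g | ∃ j : ℕ+, i + 1 ≤ (j : ℕ) ∧ x = e j}) ∧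
    Module.finrank K (lcsQuot K g 1) = 2 ∧
    (∀ i : ℕ, 2 ≤ i → Module.finrank K (lcsQuot K g i) = 1) ∧
    ((⨅ k : ℕ, LieModule.lowerCentralSeries K g g k) = ⊥) := by

  -- notation
  set lcs := LieModule.lowerCentralSeries K g g with hlcs
  have hone : ((1 : ℕ+) : ℕ) = 1 := rfl
  have htwo : ((2 : ℕ+) : ℕ) = 2 := rfl
  -- C^1 = ⊤
  have h2 : lcs 0 = ⊤ := LieModule.lowerCentralSeries_zero K g g
  -- the set equality
  have hset : ∀ n : ℕ, {x : g | ∃ j : ℕ+, n ≤ (j : ℕ) ∧ x = e j} = e '' {j : ℕ+ | n ≤ (j : ℕ)} := by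
    intro n; ext x
    constructor
    · rintro ⟨j, hj, rfl⟩; exact ⟨j, hj, rfl⟩
    · rintro ⟨j, hj, rfl⟩; exact ⟨j, hj, rfl⟩
  -- part 3
  have h3 : ∀ i : ℕ, 2 ≤ i →
      LieSubmodule.toSubmodule (lcs (i - 1)) =
        Submodule.span K {x : g | ∃ j : ℕ+, i + 1 ≤ (j : ℕ) ∧ x = e j} := by
    intro i hi
    have h := lcs_eq e hrel (i - 1) (by omega)
    rw [show i - 1 + 2 = i + 1 by omega] at h
    rw [hlcs, h, SpL_toSubmodule, hset]
  -- part 1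
  have h1 : LieSubalgebra.lieSpan K g {e 1, e 2} = ⊤ := by
    have hall : ∀ n : ℕ+, e n ∈ LieSubalgebra.lieSpan K g {e 1, e 2} := by
      have key : ∀ m : ℕ, ∀ n : ℕ+, (n : ℕ) = m →
          e n ∈ LieSubalgebra.lieSpan K g {e 1, e 2} := by
        intro m
        induction m using Nat.strong_induction_on with
        | _ m ih =>
          intro n hn
          rcases le_or_gt (n : ℕ) 2 with hle | hlt
          · have : n = 1 ∨ n = 2 := by
              have h1 := n.pos
              rcases Nat.lt_or_ge (n : ℕ) 2 with h | h
              · left; apply PNat.coe_injective; rw [hone]; omega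
              · right; apply PNat.coe_injective; rw [htwo]; omega
            rcases this with rfl | rfl
            · exact LieSubalgebra.subset_lieSpan (Set.mem_insert _ _)
            · exact LieSubalgebra.subset_lieSpan (Set.mem_insert_of_mem _ rfl)
          · set n' : ℕ+ := ⟨(n : ℕ) - 1, by omega⟩ with hn'
            have hn'c : (n' : ℕ) = (n : ℕ) - 1 := rfl
            have hsum : (1 : ℕ+) + n' = n := by
              apply PNat.coe_injective
              simp only [PNat.add_coe, PNat.one_coe, PNat.mk_coe]
              omega
            have hb := hrel 1 n'
            rw [hsum] at hb
            have hc : (((n' : ℕ) : K) - (((1 : ℕ+) : ℕ) : K)) ≠ 0 := by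
              have hne : (n' : ℕ) ≠ 1 := by
                simp only [hn', PNat.mk_coe]; omega
              rw [hone, Nat.cast_one, sub_ne_zero]
              exact_mod_cast hne
            have he1 : e 1 ∈ LieSubalgebra.lieSpan K g {e 1, e 2} :=
              LieSubalgebra.subset_lieSpan (Set.mem_insert _ _)
            have hen' : e n' ∈ LieSubalgebra.lieSpan K g {e 1, e 2} :=
              ih ((n : ℕ) - 1) (by omega) n' rfl
            have heq : e n = (((n' : ℕ) : K) - (((1 : ℕ+) : ℕ) : K))⁻¹ • ⁅e 1, e n'⁆ := by
              rw [hb, smul_smul, inv_mul_cancel₀ hc, one_smul]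
            rw [heq]
            exact (LieSubalgebra.lieSpan K g {e 1, e 2}).smul_mem _
              ((LieSubalgebra.lieSpan K g {e 1, e 2}).lie_mem he1 hen')
      exact fun n => key (n : ℕ) n rfl
    rw [eq_top_iff]
    intro x _
    have hx : x ∈ Submodule.span K (Set.range e) := by rw [e.span_eq]; trivial
    have hle : Submodule.span K (Set.range e) ≤
        (LieSubalgebra.lieSpan K g {e 1, e 2}).toSubmodule :=
      Submodule.span_le.mpr (by rintro _ ⟨n, rfl⟩; exact hall n)
    exact hle hx
  -- part 4
  have h4 : Module.finrank K (lcsQuot K g 1) = 2 := by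
    set N := LieSubmodule.toSubmodule (lcs (1 - 1)) with hNdef
    set P := LieSubmodule.toSubmodule (lcs 1) with hPdef
    have hNtop : N = ⊤ := by
      rw [hNdef, show (1 : ℕ) - 1 = 0 from rfl, h2, LieSubmodule.top_toSubmodule]
    have hP : P = Submodule.span K (e '' {j : ℕ+ | 3 ≤ (j : ℕ)}) := by
      rw [hPdef, hlcs, lcs_eq e hrel 1 le_rfl, SpL_toSubmodule]
    set φ : g →ₗ[K] (Fin 2 → K) :=
      LinearMap.pi (fun i : Fin 2 => e.coord (if i = 0 then 1 else 2)) with hφ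
    set ψ : ↥N →ₗ[K] (Fin 2 → K) := φ.comp N.subtype with hψ
    have hψval : ∀ x : ↥N, ψ x = φ (x : g) := fun x => rfl
    have hφval : ∀ (x : g) (i : Fin 2), φ x i = e.repr x (if i = 0 then 1 else 2) := by
      intro x i; simp [hφ, Module.Basis.coord_apply]
    have hker : LinearMap.ker ψ = Submodule.comap N.subtype P := by
      ext ⟨x, hx⟩
      simp only [LinearMap.mem_ker, Submodule.mem_comap, Submodule.subtype_apply, hψval]
      constructor
      · intro h0
        have ha : e.repr x 1 = 0 := by
          have := congrFun h0 0; rwa [hφval, if_pos rfl] at this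
        have hb : e.repr x 2 = 0 := by
          have := congrFun h0 1; rwa [hφval, if_neg (by decide)] at this
        rw [hP, Module.Basis.mem_span_image]
        intro j hj
        rw [Finset.mem_coe, Finsupp.mem_support_iff] at hj
        have hj1 : j ≠ 1 := fun h => hj (h ▸ ha)
        have hj2 : j ≠ 2 := fun h => hj (h ▸ hb)
        have hj1' : (j : ℕ) ≠ 1 := fun h => hj1 (PNat.coe_injective (h.trans hone.symm))
        have hj2' : (j : ℕ) ≠ 2 := fun h => hj2 (PNat.coe_injective (h.trans htwo.symm))
        have := j.pos
        show 3 ≤ (j : ℕ)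
        omega
      · intro hxP
        rw [hP, Module.Basis.mem_span_image] at hxP
        have hzero : ∀ j : ℕ+, (j : ℕ) < 3 → e.repr x j = 0 := by
          intro j hj
          by_contra hne
          have : j ∈ (e.repr x).support := Finsupp.mem_support_iff.mpr hne
          have : (3 : ℕ) ≤ (j : ℕ) := hxP this
          omega
        funext i
        fin_cases i
        · rw [hφval]; exact hzero 1 (by rw [hone]; omega)
        · rw [hφval]; exact hzero 2 (by rw [htwo]; omega)
    have hsurj : Function.Surjective ψ := by
      intro v
      refine ⟨⟨v 0 • e 1 + v 1 • e 2, by rw [hNtop]; trivial⟩, ?_⟩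
      funext i
      rw [hψval, hφval]
      fin_cases i <;>
        simp [Module.Basis.repr_self, Finsupp.single_apply, show (1 : ℕ+) ≠ 2 by decide,
          show (2 : ℕ+) ≠ 1 by decide]
    have equiv1 : (↥N ⧸ Submodule.comap N.subtype P) ≃ₗ[K] (Fin 2 → K) :=
      (Submodule.quotEquivOfEq _ _ hker.symm).trans (ψ.quotKerEquivOfSurjective hsurj)
    calc Module.finrank K (lcsQuot K g 1)
        = Module.finrank K (Fin 2 → K) := equiv1.finrank_eq
      _ = 2 := by simp [Module.finrank_fin_fun]
  -- part 5
  have h5 : ∀ i : ℕ, 2 ≤ i → Module.finrank K (lcsQuot K g i) = 1 := by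
    intro i hi
    set N := LieSubmodule.toSubmodule (lcs (i - 1)) with hNdef
    set P := LieSubmodule.toSubmodule (lcs i) with hPdef
    have hN : N = Submodule.span K (e '' {j : ℕ+ | i + 1 ≤ (j : ℕ)}) := by
      rw [hNdef, hlcs, lcs_eq e hrel (i - 1) (by omega), SpL_toSubmodule,
        show i - 1 + 2 = i + 1 by omega]
    have hP : P = Submodule.span K (e '' {j : ℕ+ | i + 2 ≤ (j : ℕ)}) := by
      rw [hPdef, hlcs, lcs_eq e hrel i (by omega), SpL_toSubmodule]
    set j₀ : ℕ+ := ⟨i + 1, by omega⟩ with hj₀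
    have hj₀c : (j₀ : ℕ) = i + 1 := rfl
    set ψ : ↥N →ₗ[K] K := (e.coord j₀).comp N.subtype with hψ
    have hψval : ∀ x : ↥N, ψ x = e.repr (x : g) j₀ := fun x => rfl
    have hker : LinearMap.ker ψ = Submodule.comap N.subtype P := by
      ext ⟨x, hx⟩
      simp only [LinearMap.mem_ker, Submodule.mem_comap, Submodule.subtype_apply, hψval]
      have hxN : ∀ j : ℕ+, j ∈ (e.repr x).support → i + 1 ≤ (j : ℕ) := by
        rw [hN, Module.Basis.mem_span_image] at hx
        exact fun j hj => hx hj
      constructor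
      · intro h0
        rw [hP, Module.Basis.mem_span_image]
        intro j hj
        rw [Finset.mem_coe] at hj
        have hge := hxN j hj
        have hne : j ≠ j₀ := fun h => (Finsupp.mem_support_iff.mp hj) (h ▸ h0)
        have hne' : (j : ℕ) ≠ i + 1 := fun h => hne (PNat.coe_injective (h.trans hj₀c.symm))
        show i + 2 ≤ (j : ℕ)
        omega
      · intro hxP
        rw [hP, Module.Basis.mem_span_image] at hxP
        by_contra hne
        have : j₀ ∈ (e.repr x).support := Finsupp.mem_support_iff.mpr hne
        have : i + 2 ≤ (j₀ : ℕ) := hxP this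
        rw [hj₀c] at this
        omega
    have hsurj : Function.Surjective ψ := by
      intro c
      have hmem : e j₀ ∈ N := by
        rw [hN]; exact Submodule.subset_span ⟨j₀, by rw [Set.mem_setOf_eq, hj₀c], rfl⟩
      refine ⟨⟨c • e j₀, N.smul_mem c hmem⟩, ?_⟩
      rw [hψval]
      simp [Module.Basis.repr_self]
    have equiv1 : (↥N ⧸ Submodule.comap N.subtype P) ≃ₗ[K] K :=
      (Submodule.quotEquivOfEq _ _ hker.symm).trans (ψ.quotKerEquivOfSurjective hsurj)
    calc Module.finrank K (lcsQuot K g i)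
        = Module.finrank K K := equiv1.finrank_eq
      _ = 1 := Module.finrank_self K
  -- part 6
  have h6 : (⨅ k : ℕ, lcs k) = ⊥ := by
    rw [eq_bot_iff]
    intro x hx
    rw [LieSubmodule.mem_iInf] at hx
    rw [LieSubmodule.mem_bot]
    have hrepr : e.repr x = 0 := by
      ext j
      by_contra hne
      have hjs : j ∈ (e.repr x).support := Finsupp.mem_support_iff.mpr hne
      have hx' : x ∈ SpL e hrel ((j : ℕ) + 2) := by
        rw [← lcs_eq e hrel (j : ℕ) j.pos]
        exact hx (j : ℕ)
      have : x ∈ Submodule.span K (e '' {j' : ℕ+ | (j : ℕ) + 2 ≤ (j' : ℕ)}) := hx'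
      rw [Module.Basis.mem_span_image] at this
      have : (j : ℕ) + 2 ≤ (j : ℕ) := this hjs
      omega
    have : e.repr x = e.repr 0 := by rw [hrepr, map_zero]
    exact e.repr.injective this
  exact ⟨h1, h2, h3, h4, h5, h6⟩
end

section
/- Let K be a field of characteristic 0 and let q ≥ 1 and 2 ≤ i_1 < i_2 < … < i_q be integers. Then the alternating (q+1)-linear form ω = ω(e^{i_1} ∧ … ∧ e^{i_q} ∧ e^{i_q+1}) := Σ_{l≥0} (−1)^l D_1^l(e^{i_1} ∧ … ∧ e^{i_q}) ∧ e^{i_q+1+l} on m0 (this sum is finite, since D_1 is locally nilpotent) is a cocycle with trivial coefficients: dω = 0, where (d f)(X_1, …, X_{q+2}) = Σ_{1≤a<b≤q+2} (−1)^{a+b−1} f([X_a, X_b], X_1, …, X̂_a, …, X̂_b, …, X_{q+2}). -/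
open Finset

noncomputable def coordE {K g : Type*} [Field K] [AddCommGroup g] [Module K g]
    (e : Module.Basis ℕ+ K g) (n : ℕ) : g →ₗ[K] K :=
  if h : 0 < n then e.coord ⟨n, h⟩ else 0

noncomputable def omegaForm {K g : Type*} [Field K] [AddCommGroup g] [Module K g]
    (e : Module.Basis ℕ+ K g) {q : ℕ} (i : Fin (q + 1) → ℕ+) :
    (Fin (q + 2) → g) → K :=
  fun X =>
    ∑ c ∈ Fintype.piFinset (fun a : Fin (q + 1) => Finset.range ((i a : ℕ) - 1)),
      (-1 : K) ^ (∑ a, c a) * (Nat.multinomial Finset.univ c : K) *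
        Matrix.det (Matrix.of fun a b : Fin (q + 2) =>
          coordE e
            (Fin.snoc (α := fun _ : Fin (q + 2) => ℕ) (fun t : Fin (q + 1) => (i t : ℕ) - c t)
              ((i (Fin.last q) : ℕ) + 1 + ∑ t, c t) a)
            (X b))

noncomputable def lieCochainDiffTriv {K g : Type*} [Field K] [LieRing g] [LieAlgebra K g]
    {m : ℕ} (f : (Fin (m + 1) → g) → K) : (Fin (m + 2) → g) → K :=
  fun X =>
    ∑ a : Fin (m + 2), ∑ b : Fin (m + 2),
      if hab : a < b then
        (-1 : K) ^ ((a : ℕ) + (b : ℕ) + 1) *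
          f (Fin.cons ⁅X a, X b⁆ (fun t : Fin m =>
            X (b.succAbove ((⟨(a : ℕ), by
                have h1 : (a : ℕ) < (b : ℕ) := hab
                have h2 : (b : ℕ) < m + 2 := b.isLt
                omega⟩ : Fin (m + 1)).succAbove t))))
      else 0

/-! ### auxiliary definitions -/

def Jrow {q' : ℕ} (i : Fin (q' + 1) → ℕ+) (c : Fin (q' + 1) → ℕ) : Fin (q' + 2) → ℕ :=
  Fin.snoc (α := fun _ : Fin (q' + 2) => ℕ) (fun t : Fin (q' + 1) => (i t : ℕ) - c t)
    ((i (Fin.last q') : ℕ) + 1 + ∑ t, c t)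

noncomputable def sgnK (K : Type*) [Field K] {r : ℕ} (c : Fin r → ℕ) : K :=
  (-1 : K) ^ (∑ a, c a) * (Nat.multinomial Finset.univ c : K)

noncomputable def F1 {K g : Type*} [Field K] [AddCommGroup g] [Module K g]
    (e : Module.Basis ℕ+ K g) {q' : ℕ} (i : Fin (q' + 1) → ℕ+) (X : Fin (q' + 3) → g)
    (c : Fin (q' + 1) → ℕ) (p : Fin (q' + 3)) (k : Fin (q' + 2)) : K :=
  Matrix.det (Matrix.of fun t b : Fin (q' + 2) =>
    Fin.cases (motive := fun _ => K) (coordE e (Jrow i c t - 1) (X (p.succAbove k)))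
      (fun b' => coordE e (Jrow i c t) (X (p.succAbove (k.succAbove b')))) b)

noncomputable def DV {K g : Type*} [Field K] [AddCommGroup g] [Module K g]
    (e : Module.Basis ℕ+ K g) {q' : ℕ} (i : Fin (q' + 1) → ℕ+) (X : Fin (q' + 3) → g)
    (c : Fin (q' + 1) → ℕ) (a : Fin (q' + 2)) : K :=
  Matrix.det (Matrix.of fun t b : Fin (q' + 3) =>
    Fin.cases (motive := fun _ => K) (coordE e 1 (X b))
      (fun t' => (if t' = a then coordE e (Jrow i c t' - 1) else coordE e (Jrow i c t')) (X b)) t)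

/-! ### previously proven lemmas -/

lemma coordE_basis {K g : Type*} [Field K] [AddCommGroup g] [Module K g] (e : Module.Basis ℕ+ K g)
    (n : ℕ) (k : ℕ+) : coordE e n (e k) = if n = (k : ℕ) then 1 else 0 := by
  unfold coordE
  by_cases h : 0 < n
  · classical
    rw [dif_pos h]
    erw [Module.Basis.coord_apply, Module.Basis.repr_self, Finsupp.single_apply]
    have heq : (k = (⟨n, h⟩ : ℕ+)) ↔ n = (k : ℕ) := by
      constructor
      · intro hh; rw [hh]; rfl
      · intro hh; exact PNat.coe_injective (by simp [hh])
    simp only [heq]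
  · have h0 : n = 0 := by omega
    have hk := k.pos
    have : n ≠ (k : ℕ) := by omega
    rw [dif_neg h, if_neg this]
    rfl

lemma coordE_bracket {K g : Type*} [Field K] [LieRing g] [LieAlgebra K g] (e : Module.Basis ℕ+ K g)
    (hm0a : ∀ i : ℕ+, 2 ≤ i → ⁅e 1, e i⁆ = e (i + 1))
    (hm0b : ∀ i j : ℕ+, 2 ≤ i → 2 ≤ j → ⁅e i, e j⁆ = 0)
    (n : ℕ) (X Y : g) :
    coordE e n ⁅X, Y⁆
      = coordE e 1 X * coordE e (n - 1) Y - coordE e (n - 1) X * coordE e 1 Y := by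
  have hbas : ∀ m k : ℕ+, coordE e n ⁅e m, e k⁆
      = coordE e 1 (e m) * coordE e (n - 1) (e k)
        - coordE e (n - 1) (e m) * coordE e 1 (e k) := by
    intro m k
    rcases eq_or_lt_of_le m.one_le with hm | hm
    · rcases eq_or_lt_of_le k.one_le with hk | hk
      · rw [← hm, ← hk, lie_self, map_zero]
        simp only [coordE_basis, PNat.one_coe]
        split_ifs <;> first | ring1 | (exfalso; omega)
      · have hkN : 2 ≤ (k : ℕ) := hk
        have hk2 : (2 : ℕ+) ≤ k := by exact_mod_cast hkN
        rw [← hm, hm0a k hk2]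
        simp only [coordE_basis, PNat.add_coe, PNat.one_coe]
        grind
    · rcases eq_or_lt_of_le k.one_le with hk | hk
      · have hmN : 2 ≤ (m : ℕ) := hm
        have hm2 : (2 : ℕ+) ≤ m := by exact_mod_cast hmN
        rw [← hk, ← lie_skew, hm0a m hm2, map_neg]
        simp only [coordE_basis, PNat.add_coe, PNat.one_coe]
        grind
      · have hmN : 2 ≤ (m : ℕ) := hm
        have hkN : 2 ≤ (k : ℕ) := hk
        have hm2 : (2 : ℕ+) ≤ m := by exact_mod_cast hmN
        have hk2 : (2 : ℕ+) ≤ k := by exact_mod_cast hkN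
        rw [hm0b m k hm2 hk2, map_zero]
        simp only [coordE_basis, PNat.one_coe]
        split_ifs <;> first | ring1 | (exfalso; omega)
  let B1 : g →ₗ[K] g →ₗ[K] K := LinearMap.mk₂ K (fun X Y => coordE e n ⁅X, Y⁆)
    (fun x y z => by simp only [add_lie, map_add])
    (fun c x y => by simp only [smul_lie, map_smul, smul_eq_mul])
    (fun x y z => by simp only [lie_add, map_add])
    (fun c x y => by simp only [lie_smul, map_smul, smul_eq_mul])
  let B2 : g →ₗ[K] g →ₗ[K] K := LinearMap.mk₂ K
    (fun X Y => coordE e 1 X * coordE e (n - 1) Y - coordE e (n - 1) X * coordE e 1 Y)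
    (fun x y z => by simp only [map_add]; ring)
    (fun c x y => by simp only [map_smul, smul_eq_mul]; ring)
    (fun x y z => by simp only [map_add]; ring)
    (fun c x y => by simp only [map_smul, smul_eq_mul]; ring)
  have hB : B1 = B2 := e.ext fun m => e.ext fun k => hbas m k
  exact LinearMap.congr_fun (LinearMap.congr_fun hB X) Y

lemma multinomial_pascal (r : ℕ) (c : Fin r → ℕ) (hc : 1 ≤ ∑ a, c a) :
    ∑ a : Fin r, (if 1 ≤ c a then Nat.multinomial univ (Function.update c a (c a - 1)) else 0)
      = Nat.multinomial univ c := by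
  have hpos : 0 < ∏ t : Fin r, (c t).factorial := prod_pos fun t _ => Nat.factorial_pos _
  apply Nat.eq_of_mul_eq_mul_left hpos
  rw [Nat.multinomial_spec, Finset.mul_sum]
  have key : ∀ a : Fin r, (∏ t, (c t).factorial) *
      (if 1 ≤ c a then Nat.multinomial univ (Function.update c a (c a - 1)) else 0)
      = c a * (∑ t, c t - 1).factorial := by
    intro a
    by_cases h : 1 ≤ c a
    · rw [if_pos h]
      have hupd : ∀ v : ℕ, ∏ t, ((Function.update c a v) t).factorial
          = v.factorial * ∏ t ∈ univ.erase a, (c t).factorial := by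
        intro v
        rw [← Finset.mul_prod_erase univ _ (mem_univ a), Function.update_self]
        congr 1
        exact Finset.prod_congr rfl fun t ht => by
          rw [Function.update_of_ne (mem_erase.mp ht).1]
      have hsum : ∑ t, Function.update c a (c a - 1) t = ∑ t, c t - 1 := by
        rw [← Finset.add_sum_erase univ _ (mem_univ a), Function.update_self,
          ← Finset.add_sum_erase univ c (mem_univ a)]
        have h1 : ∑ x ∈ univ.erase a, Function.update c a (c a - 1) x
            = ∑ x ∈ univ.erase a, c x := Finset.sum_congr rfl fun t ht =>
          Function.update_of_ne (mem_erase.mp ht).1 _ _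
        rw [h1]
        omega
      calc (∏ t, (c t).factorial) * Nat.multinomial univ (Function.update c a (c a - 1))
          = c a * ((∏ t, ((Function.update c a (c a - 1)) t).factorial) *
              Nat.multinomial univ (Function.update c a (c a - 1))) := by
            rw [hupd, ← Finset.mul_prod_erase univ _ (mem_univ a),
              ← Nat.mul_factorial_pred (by omega : c a ≠ 0)]
            ring
        _ = c a * (∑ t, c t - 1).factorial := by
            rw [Nat.multinomial_spec, hsum]
    · rw [if_neg h]
      have : c a = 0 := by omega
      simp [this]
  rw [Finset.sum_congr rfl fun a _ => key a, ← Finset.sum_mul]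
  exact Nat.mul_factorial_pred (by omega)

lemma det_antisym {K V : Type*} [Field K] [AddCommGroup V] [Module K V]
    (n : ℕ) (f G : Fin (n + 1) → (V →ₗ[K] K)) (Y : Fin (n + 1) → V) :
    ∑ k : Fin (n + 1), (-1 : K) ^ (k : ℕ) *
        Matrix.det (Matrix.of fun t b : Fin (n + 1) =>
          Fin.cases (motive := fun _ => K) (f t (Y k))
            (fun b' => G t (Y (k.succAbove b'))) b)
      = ∑ a : Fin (n + 1), Matrix.det (Matrix.of fun t b : Fin (n + 1) =>
          (if t = a then f t else G t) (Y b)) := by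
  have L : ∀ k : Fin (n + 1),
      Matrix.det (Matrix.of fun t b : Fin (n + 1) =>
          Fin.cases (motive := fun _ => K) (f t (Y k))
            (fun b' => G t (Y (k.succAbove b'))) b)
      = ∑ t : Fin (n + 1), (-1 : K) ^ (t : ℕ) * f t (Y k) *
          Matrix.det (Matrix.of fun t' b' : Fin n =>
            G (t.succAbove t') (Y (k.succAbove b'))) := by
    intro k
    set A : Matrix (Fin (n + 1)) (Fin (n + 1)) K := Matrix.of fun t b =>
      Fin.cases (motive := fun _ => K) (f t (Y k))
        (fun b' => G t (Y (k.succAbove b'))) b with hA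
    rw [Matrix.det_succ_column_zero]
    refine Finset.sum_congr rfl fun t _ => ?_
    have h1 : A t 0 = f t (Y k) := by rw [hA]; simp
    have h2 : A.submatrix t.succAbove Fin.succ
        = Matrix.of fun t' b' : Fin n => G (t.succAbove t') (Y (k.succAbove b')) := by
      ext t' b'
      rw [hA]
      simp
    rw [h1, h2]
  have R : ∀ a : Fin (n + 1),
      Matrix.det (Matrix.of fun t b : Fin (n + 1) => (if t = a then f t else G t) (Y b))
      = ∑ k : Fin (n + 1), (-1 : K) ^ ((a : ℕ) + (k : ℕ)) * f a (Y k) *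
          Matrix.det (Matrix.of fun t' b' : Fin n =>
            G (a.succAbove t') (Y (k.succAbove b'))) := by
    intro a
    set A : Matrix (Fin (n + 1)) (Fin (n + 1)) K := Matrix.of fun t b =>
      (if t = a then f t else G t) (Y b) with hA
    rw [Matrix.det_succ_row _ a]
    refine Finset.sum_congr rfl fun k _ => ?_
    have h1 : A a k = f a (Y k) := by rw [hA]; simp
    have h2 : A.submatrix a.succAbove k.succAbove
        = Matrix.of fun t' b' : Fin n => G (a.succAbove t') (Y (k.succAbove b')) := by
      ext t' b'
      rw [hA]
      simp [Fin.succAbove_ne]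
    rw [h1, h2]
  calc ∑ k : Fin (n+1), (-1:K)^(k:ℕ) * Matrix.det (Matrix.of fun t b : Fin (n + 1) =>
          Fin.cases (motive := fun _ => K) (f t (Y k))
            (fun b' => G t (Y (k.succAbove b'))) b)
      = ∑ k : Fin (n+1), ∑ t : Fin (n+1), (-1:K)^((t:ℕ)+(k:ℕ)) * f t (Y k) *
          Matrix.det (Matrix.of fun t' b' : Fin n =>
            G (t.succAbove t') (Y (k.succAbove b'))) := by
        refine Finset.sum_congr rfl fun k _ => ?_
        rw [L k, Finset.mul_sum]
        refine Finset.sum_congr rfl fun t _ => ?_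
        rw [pow_add]
        ring
    _ = _ := by
        rw [Finset.sum_comm]
        exact Finset.sum_congr rfl fun a _ => (R a).symm

lemma succAbove_swap {n : ℕ} (a b : Fin (n + 2)) (hab : a < b) (ha : (a : ℕ) < n + 1)
    (hb : (b : ℕ) - 1 < n + 1) (t : Fin n) :
    b.succAbove ((⟨(a : ℕ), ha⟩ : Fin (n + 1)).succAbove t)
      = a.succAbove ((⟨(b : ℕ) - 1, hb⟩ : Fin (n + 1)).succAbove t) := by
  have habn : (a : ℕ) < (b : ℕ) := hab
  have hbn : (b : ℕ) < n + 2 := b.isLt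
  have htn : (t : ℕ) < n := t.isLt
  apply Fin.ext
  simp only [Fin.succAbove, Fin.lt_def, Fin.coe_castSucc, Fin.val_succ]
  split_ifs <;> simp_all <;> omega

/-! ### main steps -/

section Main

variable {K g : Type*} [Field K] [CharZero K] [LieRing g] [LieAlgebra K g]
  (e : Module.Basis ℕ+ K g)
  (hm0a : ∀ i : ℕ+, 2 ≤ i → ⁅e 1, e i⁆ = e (i + 1))
  (hm0b : ∀ i j : ℕ+, 2 ≤ i → 2 ≤ j → ⁅e i, e j⁆ = 0)
  {q' : ℕ} (i : Fin (q' + 1) → ℕ+) (X : Fin (q' + 3) → g)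

-- the per-pair, per-c determinant identity
include hm0a hm0b in
lemma pair_det (c : Fin (q' + 1) → ℕ) (a b : Fin (q' + 3)) (hab : a < b)
    (ha : (a : ℕ) < q' + 2) (hb : (b : ℕ) - 1 < q' + 2) :
    Matrix.det (Matrix.of fun t b' : Fin (q' + 2) =>
        coordE e (Jrow i c t)
          ((Fin.cons (α := fun _ : Fin (q' + 2) => g) ⁅X a, X b⁆ (fun u : Fin (q' + 1) =>
            X (b.succAbove ((⟨(a : ℕ), ha⟩ : Fin (q' + 2)).succAbove u)))) b'))
      = coordE e 1 (X a) * F1 e i X c a ⟨(b : ℕ) - 1, hb⟩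
        - coordE e 1 (X b) * F1 e i X c b ⟨(a : ℕ), ha⟩ := by
  have habn : (a : ℕ) < (b : ℕ) := hab
  have hbpos : 1 ≤ (b : ℕ) := by omega
  -- common minor determinant
  set Dm : Fin (q' + 2) → K := fun t => Matrix.det (Matrix.of fun t' u : Fin (q' + 1) =>
    coordE e (Jrow i c (t.succAbove t'))
      (X (b.succAbove ((⟨(a : ℕ), ha⟩ : Fin (q' + 2)).succAbove u)))) with hDm
  have hsab : a.succAbove (⟨(b : ℕ) - 1, hb⟩ : Fin (q' + 2)) = b := by
    apply Fin.ext
    rw [Fin.succAbove_of_le_castSucc]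
    · simp only [Fin.val_succ]
      omega
    · rw [Fin.le_def]
      simp only [Fin.coe_castSucc]
      omega
  have hsba : b.succAbove (⟨(a : ℕ), ha⟩ : Fin (q' + 2)) = a := by
    apply Fin.ext
    rw [Fin.succAbove_of_castSucc_lt]
    · rfl
    · rw [Fin.lt_def]
      exact habn
  have hL : Matrix.det (Matrix.of fun t b' : Fin (q' + 2) =>
        coordE e (Jrow i c t)
          ((Fin.cons (α := fun _ : Fin (q' + 2) => g) ⁅X a, X b⁆ (fun u : Fin (q' + 1) =>
            X (b.succAbove ((⟨(a : ℕ), ha⟩ : Fin (q' + 2)).succAbove u)))) b'))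
      = ∑ t : Fin (q' + 2), (-1 : K) ^ (t : ℕ) * coordE e (Jrow i c t) ⁅X a, X b⁆ * Dm t := by
    rw [Matrix.det_succ_column_zero]
    refine Finset.sum_congr rfl fun t _ => ?_
    have e1 : (Matrix.of fun t b' : Fin (q' + 2) =>
        coordE e (Jrow i c t)
          ((Fin.cons (α := fun _ : Fin (q' + 2) => g) ⁅X a, X b⁆ (fun u : Fin (q' + 1) =>
            X (b.succAbove ((⟨(a : ℕ), ha⟩ : Fin (q' + 2)).succAbove u)))) b')) t 0
        = coordE e (Jrow i c t) ⁅X a, X b⁆ := by simp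
    have e2 : (Matrix.of fun t b' : Fin (q' + 2) =>
        coordE e (Jrow i c t)
          ((Fin.cons (α := fun _ : Fin (q' + 2) => g) ⁅X a, X b⁆ (fun u : Fin (q' + 1) =>
            X (b.succAbove ((⟨(a : ℕ), ha⟩ : Fin (q' + 2)).succAbove u)))) b')).submatrix
          t.succAbove Fin.succ
        = Matrix.of fun t' u : Fin (q' + 1) =>
            coordE e (Jrow i c (t.succAbove t'))
              (X (b.succAbove ((⟨(a : ℕ), ha⟩ : Fin (q' + 2)).succAbove u))) := by
      ext t' u
      simp
    rw [e1, e2, hDm]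
  have hF1a : F1 e i X c a ⟨(b : ℕ) - 1, hb⟩
      = ∑ t : Fin (q' + 2), (-1 : K) ^ (t : ℕ) * coordE e (Jrow i c t - 1) (X b) * Dm t := by
    unfold F1
    rw [Matrix.det_succ_column_zero]
    refine Finset.sum_congr rfl fun t _ => ?_
    have e1 : (Matrix.of fun t k : Fin (q' + 2) =>
        Fin.cases (motive := fun _ => K)
          (coordE e (Jrow i c t - 1) (X (a.succAbove ⟨(b : ℕ) - 1, hb⟩)))
          (fun b' => coordE e (Jrow i c t)
            (X (a.succAbove ((⟨(b : ℕ) - 1, hb⟩ : Fin (q' + 2)).succAbove b')))) k) t 0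
        = coordE e (Jrow i c t - 1) (X b) := by
      simp [hsab]
    have e2 : (Matrix.of fun t k : Fin (q' + 2) =>
        Fin.cases (motive := fun _ => K)
          (coordE e (Jrow i c t - 1) (X (a.succAbove ⟨(b : ℕ) - 1, hb⟩)))
          (fun b' => coordE e (Jrow i c t)
            (X (a.succAbove ((⟨(b : ℕ) - 1, hb⟩ : Fin (q' + 2)).succAbove b')))) k).submatrix
          t.succAbove Fin.succ
        = Matrix.of fun t' u : Fin (q' + 1) =>
            coordE e (Jrow i c (t.succAbove t'))
              (X (b.succAbove ((⟨(a : ℕ), ha⟩ : Fin (q' + 2)).succAbove u))) := by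
      ext t' u
      simp [succAbove_swap a b hab ha hb u]
    rw [e1, e2, hDm]
  have hF1b : F1 e i X c b ⟨(a : ℕ), ha⟩
      = ∑ t : Fin (q' + 2), (-1 : K) ^ (t : ℕ) * coordE e (Jrow i c t - 1) (X a) * Dm t := by
    unfold F1
    rw [Matrix.det_succ_column_zero]
    refine Finset.sum_congr rfl fun t _ => ?_
    have e1 : (Matrix.of fun t k : Fin (q' + 2) =>
        Fin.cases (motive := fun _ => K)
          (coordE e (Jrow i c t - 1) (X (b.succAbove ⟨(a : ℕ), ha⟩)))
          (fun b' => coordE e (Jrow i c t)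
            (X (b.succAbove ((⟨(a : ℕ), ha⟩ : Fin (q' + 2)).succAbove b')))) k) t 0
        = coordE e (Jrow i c t - 1) (X a) := by
      simp [hsba]
    have e2 : (Matrix.of fun t k : Fin (q' + 2) =>
        Fin.cases (motive := fun _ => K)
          (coordE e (Jrow i c t - 1) (X (b.succAbove ⟨(a : ℕ), ha⟩)))
          (fun b' => coordE e (Jrow i c t)
            (X (b.succAbove ((⟨(a : ℕ), ha⟩ : Fin (q' + 2)).succAbove b')))) k).submatrix
          t.succAbove Fin.succ
        = Matrix.of fun t' u : Fin (q' + 1) =>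
            coordE e (Jrow i c (t.succAbove t'))
              (X (b.succAbove ((⟨(a : ℕ), ha⟩ : Fin (q' + 2)).succAbove u))) := by
      ext t' u
      simp
    rw [e1, e2, hDm]
  rw [hL, hF1a, hF1b, Finset.mul_sum, Finset.mul_sum, ← Finset.sum_sub_distrib]
  refine Finset.sum_congr rfl fun t _ => ?_
  rw [coordE_bracket e hm0a hm0b]
  ring

-- step: rewrite the differential as a (p,k)-indexed sum
include hm0a hm0b in
lemma step_pk :
    lieCochainDiffTriv (omegaForm e i) X
      = ∑ p : Fin (q' + 3), ∑ k : Fin (q' + 2),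
          (-1 : K) ^ ((p : ℕ) + (k : ℕ)) * coordE e 1 (X p) *
            ∑ c ∈ Fintype.piFinset (fun a : Fin (q' + 1) => Finset.range ((i a : ℕ) - 1)),
              sgnK K c * F1 e i X c p k := by
  classical
  set PF := Fintype.piFinset (fun a : Fin (q' + 1) => Finset.range ((i a : ℕ) - 1)) with hPF
  set S : Fin (q' + 3) → Fin (q' + 2) → K := fun p k => ∑ c ∈ PF, sgnK K c * F1 e i X c p k
    with hS
  have hka : ∀ s : Fin (q' + 3), (s : ℕ) % (q' + 2) < q' + 2 := fun s => Nat.mod_lt _ (by omega)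
  have hkb : ∀ s : Fin (q' + 3), (s : ℕ) - 1 < q' + 2 := fun s => by
    have := s.isLt; omega
  set ka : Fin (q' + 3) → Fin (q' + 2) := fun s => ⟨(s : ℕ) % (q' + 2), hka s⟩ with hkadef
  set kb : Fin (q' + 3) → Fin (q' + 2) := fun s => ⟨(s : ℕ) - 1, hkb s⟩ with hkbdef
  have E1 : lieCochainDiffTriv (omegaForm e i) X
      = ∑ a : Fin (q' + 3), ∑ b : Fin (q' + 3),
          (if a < b then (-1 : K) ^ ((a : ℕ) + (b : ℕ) + 1) *
            (coordE e 1 (X a) * S a (kb b) - coordE e 1 (X b) * S b (ka a)) else 0) := by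
    unfold lieCochainDiffTriv
    refine Finset.sum_congr rfl fun a _ => Finset.sum_congr rfl fun b _ => ?_
    by_cases hab : a < b
    · rw [dif_pos hab, if_pos hab]
      have ha : (a : ℕ) < q' + 2 := by
        have h1 : (a : ℕ) < (b : ℕ) := hab
        have h2 : (b : ℕ) < q' + 3 := b.isLt
        omega
      have hmod : ka a = ⟨(a : ℕ), ha⟩ := by
        apply Fin.ext
        simp only [hkadef]
        exact Nat.mod_eq_of_lt ha
      have hkb' : kb b = ⟨(b : ℕ) - 1, hkb b⟩ := rfl
      have homega : omegaForm e i (Fin.cons ⁅X a, X b⁆ (fun t : Fin (q' + 1) =>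
          X (b.succAbove ((⟨(a : ℕ), ha⟩ : Fin (q' + 2)).succAbove t))))
          = coordE e 1 (X a) * S a (kb b) - coordE e 1 (X b) * S b (ka a) := by
        unfold omegaForm
        rw [hmod, hkb']
        calc ∑ c ∈ PF, (-1 : K) ^ (∑ a', c a') * (Nat.multinomial Finset.univ c : K) *
              Matrix.det (Matrix.of fun t b' : Fin (q' + 2) =>
                coordE e (Jrow i c t)
                  ((Fin.cons (α := fun _ : Fin (q' + 2) => g) ⁅X a, X b⁆
                    (fun u : Fin (q' + 1) =>
                      X (b.succAbove ((⟨(a : ℕ), ha⟩ : Fin (q' + 2)).succAbove u)))) b'))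
            = ∑ c ∈ PF, (sgnK K c * (coordE e 1 (X a) * F1 e i X c a ⟨(b : ℕ) - 1, hkb b⟩)
                - sgnK K c * (coordE e 1 (X b) * F1 e i X c b ⟨(a : ℕ), ha⟩)) := by
              refine Finset.sum_congr rfl fun c _ => ?_
              rw [pair_det e hm0a hm0b i X c a b hab ha (hkb b)]
              unfold sgnK
              ring
          _ = _ := by
              rw [Finset.sum_sub_distrib, hS]
              rw [Finset.mul_sum, Finset.mul_sum]
              congr 1
              · exact Finset.sum_congr rfl fun c _ => by ring
              · exact Finset.sum_congr rfl fun c _ => by ring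
      exact congrArg _ homega
    · rw [dif_neg hab, if_neg hab]
  rw [E1]
  have E2 : ∀ a b : Fin (q' + 3),
      (if a < b then (-1 : K) ^ ((a : ℕ) + (b : ℕ) + 1) *
        (coordE e 1 (X a) * S a (kb b) - coordE e 1 (X b) * S b (ka a)) else 0)
      = (if a < b then (-1 : K) ^ ((a : ℕ) + (b : ℕ) + 1) *
          coordE e 1 (X a) * S a (kb b) else 0)
        + (if a < b then (-1 : K) ^ ((a : ℕ) + (b : ℕ)) *
          coordE e 1 (X b) * S b (ka a) else 0) := by
    intro a b
    by_cases hab : a < b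
    · rw [if_pos hab, if_pos hab, if_pos hab, pow_succ]
      ring
    · rw [if_neg hab, if_neg hab, if_neg hab]
      ring
  simp_rw [E2, Finset.sum_add_distrib]
  have E3 : ∑ a : Fin (q' + 3), ∑ b : Fin (q' + 3),
      (if a < b then (-1 : K) ^ ((a : ℕ) + (b : ℕ)) * coordE e 1 (X b) * S b (ka a) else 0)
      = ∑ p : Fin (q' + 3), ∑ s : Fin (q' + 3),
        (if s < p then (-1 : K) ^ ((p : ℕ) + (s : ℕ)) * coordE e 1 (X p) * S p (ka s) else 0) := by
    rw [Finset.sum_comm]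
    refine Finset.sum_congr rfl fun p _ => Finset.sum_congr rfl fun s _ => ?_
    by_cases h : s < p
    · rw [if_pos h, if_pos h, Nat.add_comm (s : ℕ) (p : ℕ)]
    · rw [if_neg h, if_neg h]
  rw [E3, ← Finset.sum_add_distrib]
  refine Finset.sum_congr rfl fun p _ => ?_
  rw [← Finset.sum_add_distrib]
  have E4 : ∀ s : Fin (q' + 3),
      ((if p < s then (-1 : K) ^ ((p : ℕ) + (s : ℕ) + 1) * coordE e 1 (X p) * S p (kb s) else 0)
        + (if s < p then (-1 : K) ^ ((p : ℕ) + (s : ℕ)) * coordE e 1 (X p) * S p (ka s) else 0))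
      = (if p < s then (-1 : K) ^ ((p : ℕ) + (s : ℕ) + 1) * coordE e 1 (X p) * S p (kb s)
          else if s < p then (-1 : K) ^ ((p : ℕ) + (s : ℕ)) * coordE e 1 (X p) * S p (ka s)
          else 0) := by
    intro s
    rcases lt_trichotomy p s with h | h | h
    · simp only [if_pos h, if_neg (asymm h), add_zero]
    · subst h
      simp [lt_irrefl]
    · simp only [if_neg (asymm h), if_pos h, zero_add]
  simp_rw [E4]
  rw [Fin.sum_univ_succAbove (fun s => (if p < s then
      (-1 : K) ^ ((p : ℕ) + (s : ℕ) + 1) * coordE e 1 (X p) * S p (kb s)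
      else if s < p then (-1 : K) ^ ((p : ℕ) + (s : ℕ)) * coordE e 1 (X p) * S p (ka s)
      else 0)) p]
  rw [if_neg (lt_irrefl p), if_neg (lt_irrefl p), zero_add]
  refine Finset.sum_congr rfl fun k _ => ?_
  rcases lt_or_ge (Fin.castSucc k) p with h | h
  · have hs : p.succAbove k = Fin.castSucc k := Fin.succAbove_of_castSucc_lt p k h
    rw [hs, if_neg (asymm h), if_pos h]
    have hval : ((Fin.castSucc k : Fin (q' + 3)) : ℕ) = (k : ℕ) := rfl
    have hk2 : ka (Fin.castSucc k) = k := by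
      apply Fin.ext
      simp only [hkadef, hval]
      exact Nat.mod_eq_of_lt k.isLt
    rw [hk2, hval]
  · have hs : p.succAbove k = Fin.succ k := Fin.succAbove_of_le_castSucc p k h
    have hlt : p < Fin.succ k := by
      rw [Fin.lt_def]
      rw [Fin.le_def] at h
      simp only [Fin.coe_castSucc] at h
      simp only [Fin.val_succ]
      omega
    rw [hs, if_pos hlt]
    have hval : ((Fin.succ k : Fin (q' + 3)) : ℕ) = (k : ℕ) + 1 := rfl
    have hk2 : kb (Fin.succ k) = k := by
      apply Fin.ext
      simp only [hkbdef, hval]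
      omega
    rw [hk2, hval]
    have hsign : (-1 : K) ^ ((p : ℕ) + ((k : ℕ) + 1) + 1) = (-1 : K) ^ ((p : ℕ) + (k : ℕ)) := by
      have : (p : ℕ) + ((k : ℕ) + 1) + 1 = ((p : ℕ) + (k : ℕ)) + 2 := by omega
      rw [this, pow_add]
      norm_num
    rw [hsign]

-- step: apply det_antisym and fold rows
lemma step_fold :
    (∑ p : Fin (q' + 3), ∑ k : Fin (q' + 2),
        (-1 : K) ^ ((p : ℕ) + (k : ℕ)) * coordE e 1 (X p) *
          ∑ c ∈ Fintype.piFinset (fun a : Fin (q' + 1) => Finset.range ((i a : ℕ) - 1)),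
            sgnK K c * F1 e i X c p k)
      = ∑ c ∈ Fintype.piFinset (fun a : Fin (q' + 1) => Finset.range ((i a : ℕ) - 1)),
          sgnK K c * ∑ a : Fin (q' + 2), DV e i X c a := by
  classical
  set PF := Fintype.piFinset (fun a : Fin (q' + 1) => Finset.range ((i a : ℕ) - 1)) with hPF
  set P1 : Fin (q' + 3) → K := fun p => (-1 : K) ^ (p : ℕ) * coordE e 1 (X p) with hP1
  set RM : (Fin (q' + 1) → ℕ) → Fin (q' + 3) → Fin (q' + 2) → K := fun c p a =>
    Matrix.det (Matrix.of fun t b : Fin (q' + 2) =>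
      (if t = a then coordE e (Jrow i c t - 1) else coordE e (Jrow i c t))
        (X (p.succAbove b))) with hRM
  have hCA : ∀ (c : Fin (q' + 1) → ℕ) (p : Fin (q' + 3)),
      (∑ k : Fin (q' + 2), (-1 : K) ^ (k : ℕ) * F1 e i X c p k)
        = ∑ a : Fin (q' + 2), RM c p a := by
    intro c p
    rw [hRM]
    unfold F1
    exact det_antisym (q' + 1) (fun t => coordE e (Jrow i c t - 1))
      (fun t => coordE e (Jrow i c t)) (fun u => X (p.succAbove u))
  have hDV : ∀ (c : Fin (q' + 1) → ℕ) (a : Fin (q' + 2)), DV e i X c a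
      = ∑ p : Fin (q' + 3), P1 p * RM c p a := by
    intro c a
    unfold DV
    rw [Matrix.det_succ_row_zero]
    refine Finset.sum_congr rfl fun p _ => ?_
    have e1 : (Matrix.of fun t b : Fin (q' + 3) =>
        Fin.cases (motive := fun _ => K) (coordE e 1 (X b))
          (fun t' => (if t' = a then coordE e (Jrow i c t' - 1) else coordE e (Jrow i c t'))
            (X b)) t) 0 p = coordE e 1 (X p) := by simp
    have e2 : (Matrix.of fun t b : Fin (q' + 3) =>
        Fin.cases (motive := fun _ => K) (coordE e 1 (X b))
          (fun t' => (if t' = a then coordE e (Jrow i c t' - 1) else coordE e (Jrow i c t'))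
            (X b)) t).submatrix Fin.succ p.succAbove
        = Matrix.of fun t b : Fin (q' + 2) =>
            (if t = a then coordE e (Jrow i c t - 1) else coordE e (Jrow i c t))
              (X (p.succAbove b)) := by
      ext t' b'
      simp
    rw [e1, e2, hP1, hRM]
  calc ∑ p : Fin (q' + 3), ∑ k : Fin (q' + 2),
        (-1 : K) ^ ((p : ℕ) + (k : ℕ)) * coordE e 1 (X p) *
          ∑ c ∈ PF, sgnK K c * F1 e i X c p k
      = ∑ p : Fin (q' + 3), ∑ k : Fin (q' + 2), ∑ c ∈ PF,
          sgnK K c * (P1 p * ((-1 : K) ^ (k : ℕ) * F1 e i X c p k)) := by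
        refine Finset.sum_congr rfl fun p _ => Finset.sum_congr rfl fun k _ => ?_
        rw [Finset.mul_sum]
        refine Finset.sum_congr rfl fun c _ => ?_
        rw [hP1, pow_add]
        ring
    _ = ∑ p : Fin (q' + 3), ∑ c ∈ PF, ∑ k : Fin (q' + 2),
          sgnK K c * (P1 p * ((-1 : K) ^ (k : ℕ) * F1 e i X c p k)) := by
        exact Finset.sum_congr rfl fun p _ => Finset.sum_comm
    _ = ∑ p : Fin (q' + 3), ∑ c ∈ PF, sgnK K c *
          (P1 p * ∑ k : Fin (q' + 2), (-1 : K) ^ (k : ℕ) * F1 e i X c p k) := by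
        refine Finset.sum_congr rfl fun p _ => Finset.sum_congr rfl fun c _ => ?_
        rw [Finset.mul_sum, Finset.mul_sum]
    _ = ∑ p : Fin (q' + 3), ∑ c ∈ PF, ∑ a : Fin (q' + 2), sgnK K c * (P1 p * RM c p a) := by
        refine Finset.sum_congr rfl fun p _ => Finset.sum_congr rfl fun c _ => ?_
        rw [hCA, Finset.mul_sum, Finset.mul_sum]
    _ = ∑ c ∈ PF, ∑ a : Fin (q' + 2), ∑ p : Fin (q' + 3), sgnK K c * (P1 p * RM c p a) := by
        rw [Finset.sum_comm]
        exact Finset.sum_congr rfl fun c _ => Finset.sum_comm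
    _ = ∑ c ∈ PF, sgnK K c * ∑ a : Fin (q' + 2), DV e i X c a := by
        refine Finset.sum_congr rfl fun c _ => ?_
        rw [Finset.mul_sum]
        refine Finset.sum_congr rfl fun a _ => ?_
        rw [hDV c a, Finset.mul_sum]

-- step: telescoping
lemma step_telescope (h2 : 2 ≤ i 0) (hmono : StrictMono i) :
    (∑ c ∈ Fintype.piFinset (fun a : Fin (q' + 1) => Finset.range ((i a : ℕ) - 1)),
        sgnK K c * ∑ a : Fin (q' + 2), DV e i X c a) = 0 := by
  classical
  set PF := Fintype.piFinset (fun a : Fin (q' + 1) => Finset.range ((i a : ℕ) - 1)) with hPF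
  have hige : ∀ a : Fin (q' + 1), 2 ≤ (i a : ℕ) := by
    intro a
    have h0 : i 0 ≤ i a := hmono.monotone (Fin.zero_le a)
    have h1 : (2 : ℕ+) ≤ i a := le_trans h2 h0
    exact_mod_cast h1
  have hmem : ∀ c ∈ PF, ∀ a : Fin (q' + 1), c a < (i a : ℕ) - 1 := by
    intro c hc a
    rw [hPF, Fintype.mem_piFinset] at hc
    exact Finset.mem_range.mp (hc a)
  have hsum_split : ∀ (c : Fin (q' + 1) → ℕ) (a' : Fin (q' + 1)),
      ∑ t, c t = c a' + ∑ t ∈ univ.erase a', c t := fun c a' =>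
    (Finset.add_sum_erase univ c (mem_univ a')).symm
  have hupd_sum : ∀ (c : Fin (q' + 1) → ℕ) (a' : Fin (q' + 1)) (v : ℕ),
      ∑ t, Function.update c a' v t = v + ∑ t ∈ univ.erase a', c t := by
    intro c a' v
    rw [← Finset.add_sum_erase univ _ (mem_univ a'), Function.update_self]
    congr 1
    exact Finset.sum_congr rfl fun t ht => Function.update_of_ne (mem_erase.mp ht).1 _ _
  have K1 : ∀ (c : Fin (q' + 1) → ℕ) (a' : Fin (q' + 1)),
      DV e i X c (Fin.castSucc a')
        = DV e i X (Function.update c a' (c a' + 1)) (Fin.last (q' + 1)) := by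
    intro c a'
    unfold DV
    congr 1
    ext t b
    refine Fin.cases ?_ (fun t' => ?_) t
    · simp
    · simp only [Matrix.of_apply, Fin.cases_succ]
      refine Fin.lastCases ?_ (fun u => ?_) t'
      · rw [if_neg ((Fin.castSucc_lt_last a').ne'), if_pos rfl]
        congr 2
        simp only [Jrow, Fin.snoc_last]
        rw [hupd_sum, hsum_split c a']
        omega
      · rw [if_neg ((Fin.castSucc_lt_last u).ne)]
        by_cases hu : u = a'
        · subst hu
          rw [if_pos rfl]
          congr 2
          simp only [Jrow, Fin.snoc_castSucc, Function.update_self]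
          omega
        · rw [if_neg (fun hh => hu (Fin.castSucc_inj.mp hh))]
          congr 2
          simp only [Jrow, Fin.snoc_castSucc, Function.update_of_ne hu]
  have Z1 : ∀ c ∈ PF, ∀ a' : Fin (q' + 1), c a' = (i a' : ℕ) - 2 →
      DV e i X c (Fin.castSucc a') = 0 := by
    intro c hc a' hca
    unfold DV
    apply Matrix.det_zero_of_row_eq
      (i := (0 : Fin (q' + 3))) (j := Fin.succ (Fin.castSucc a')) (Fin.succ_ne_zero _).symm
    funext b
    simp only [Matrix.of_apply, Fin.cases_zero, Fin.cases_succ, if_pos rfl]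
    congr 2
    simp only [Jrow, Fin.snoc_castSucc]
    have := hige a'
    omega
  calc ∑ c ∈ PF, sgnK K c * ∑ a : Fin (q' + 2), DV e i X c a
      = (∑ c ∈ PF, ∑ a' : Fin (q' + 1), sgnK K c * DV e i X c (Fin.castSucc a'))
        + ∑ c ∈ PF, sgnK K c * DV e i X c (Fin.last (q' + 1)) := by
        rw [← Finset.sum_add_distrib]
        refine Finset.sum_congr rfl fun c _ => ?_
        rw [Fin.sum_univ_castSucc (f := fun a => DV e i X c a), mul_add, Finset.mul_sum]
    _ = (∑ a' : Fin (q' + 1), ∑ c ∈ PF, sgnK K c * DV e i X c (Fin.castSucc a'))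
        + ∑ c ∈ PF, sgnK K c * DV e i X c (Fin.last (q' + 1)) := by
        rw [Finset.sum_comm]
    _ = (∑ a' : Fin (q' + 1), ∑ c ∈ PF,
          (if 1 ≤ c a' then sgnK K (Function.update c a' (c a' - 1)) else 0)
            * DV e i X c (Fin.last (q' + 1)))
        + ∑ c ∈ PF, sgnK K c * DV e i X c (Fin.last (q' + 1)) := by
        congr 1
        refine Finset.sum_congr rfl fun a' _ => ?_
        calc ∑ c ∈ PF, sgnK K c * DV e i X c (Fin.castSucc a')
            = ∑ c ∈ PF.filter (fun c => c a' + 1 < (i a' : ℕ) - 1),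
                sgnK K c * DV e i X c (Fin.castSucc a') := by
              refine (Finset.sum_filter_of_ne ?_).symm
              intro c hc hne
              by_contra hbad
              have hca : c a' = (i a' : ℕ) - 2 := by
                have := hmem c hc a'
                have := hige a'
                omega
              exact hne (by rw [Z1 c hc a' hca, mul_zero])
          _ = ∑ c' ∈ PF.filter (fun c' => 1 ≤ c' a'),
                sgnK K (Function.update c' a' (c' a' - 1))
                  * DV e i X c' (Fin.last (q' + 1)) := by
              refine Finset.sum_nbij' (i := fun c => Function.update c a' (c a' + 1))
                (j := fun c' => Function.update c' a' (c' a' - 1)) ?_ ?_ ?_ ?_ ?_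
              · intro c hc
                rw [Finset.mem_filter] at hc ⊢
                obtain ⟨hc1, hc2⟩ := hc
                constructor
                · rw [hPF, Fintype.mem_piFinset] at hc1 ⊢
                  intro t
                  rw [Finset.mem_range]
                  by_cases ht : t = a'
                  · subst ht
                    rw [Function.update_self]
                    omega
                  · rw [Function.update_of_ne ht]
                    exact Finset.mem_range.mp (hc1 t)
                · rw [Function.update_self]
                  omega
              · intro c' hc'
                rw [Finset.mem_filter] at hc' ⊢
                obtain ⟨hc1, hc2⟩ := hc'
                constructor
                · rw [hPF, Fintype.mem_piFinset] at hc1 ⊢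
                  intro t
                  rw [Finset.mem_range]
                  by_cases ht : t = a'
                  · subst ht
                    rw [Function.update_self]
                    have := Finset.mem_range.mp (hc1 t)
                    omega
                  · rw [Function.update_of_ne ht]
                    exact Finset.mem_range.mp (hc1 t)
                · rw [Function.update_self]
                  have := hmem c' hc1 a'
                  omega
              · intro c hc
                funext t
                by_cases ht : t = a'
                · subst ht
                  simp only [Function.update_self]
                  omega
                · rw [Function.update_of_ne ht, Function.update_of_ne ht]
              · intro c' hc'
                rw [Finset.mem_filter] at hc'
                funext t
                by_cases ht : t = a'
                · subst ht
                  simp only [Function.update_self]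
                  omega
                · rw [Function.update_of_ne ht, Function.update_of_ne ht]
              · intro c hc
                rw [Finset.mem_filter] at hc
                have hcol : Function.update (Function.update c a' (c a' + 1)) a'
                    (Function.update c a' (c a' + 1) a' - 1) = c := by
                  funext t
                  by_cases ht : t = a'
                  · subst ht
                    simp [Function.update_self]
                  · rw [Function.update_of_ne ht, Function.update_of_ne ht]
                rw [hcol, K1 c a']
          _ = ∑ c ∈ PF,
                (if 1 ≤ c a' then sgnK K (Function.update c a' (c a' - 1)) else 0)
                  * DV e i X c (Fin.last (q' + 1)) := by
              rw [Finset.sum_filter]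
              refine Finset.sum_congr rfl fun c _ => ?_
              split_ifs with h
              · rfl
              · rw [zero_mul]
    _ = ∑ c ∈ PF,
          ((∑ a' : Fin (q' + 1),
            if 1 ≤ c a' then sgnK K (Function.update c a' (c a' - 1)) else 0) + sgnK K c)
            * DV e i X c (Fin.last (q' + 1)) := by
        rw [Finset.sum_comm, ← Finset.sum_add_distrib]
        refine Finset.sum_congr rfl fun c _ => ?_
        rw [add_mul, Finset.sum_mul]
    _ = 0 := by
        refine Finset.sum_eq_zero fun c hc => ?_
        by_cases hs : 1 ≤ ∑ t, c t
        · have hcoef : (∑ a' : Fin (q' + 1),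
              if 1 ≤ c a' then sgnK K (Function.update c a' (c a' - 1)) else 0) + sgnK K c
              = 0 := by
            have hsg : ∀ a' : Fin (q' + 1),
                (if 1 ≤ c a' then sgnK K (Function.update c a' (c a' - 1)) else 0)
                = (-1 : K) ^ ((∑ t, c t) - 1) *
                  (if 1 ≤ c a' then
                    (Nat.multinomial univ (Function.update c a' (c a' - 1)) : K) else 0) := by
              intro a'
              by_cases h1 : 1 ≤ c a'
              · rw [if_pos h1, if_pos h1]
                unfold sgnK
                congr 2
                rw [hupd_sum, hsum_split c a']
                omega
              · rw [if_neg h1, if_neg h1, mul_zero]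
            rw [Finset.sum_congr rfl fun a' _ => hsg a', ← Finset.mul_sum]
            have hpK : (∑ a' : Fin (q' + 1), if 1 ≤ c a' then
                (Nat.multinomial univ (Function.update c a' (c a' - 1)) : K) else 0)
                = (Nat.multinomial univ c : K) := by
              rw [← multinomial_pascal (q' + 1) c hs, Nat.cast_sum]
              refine Finset.sum_congr rfl fun a' _ => ?_
              rw [apply_ite (Nat.cast : ℕ → K), Nat.cast_zero]
            rw [hpK]
            unfold sgnK
            obtain ⟨m, hm⟩ : ∃ m, ∑ t, c t = m + 1 := ⟨∑ t, c t - 1, by omega⟩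
            rw [hm, Nat.add_sub_cancel, pow_succ]
            ring
          rw [hcoef, zero_mul]
        · have hc0 : ∀ t, c t = 0 := by
            intro t
            have h0 : ∑ t, c t = 0 := by omega
            have ht' := Finset.sum_eq_zero_iff.mp h0 t (mem_univ t)
            exact ht'
          have hDV0 : DV e i X c (Fin.last (q' + 1)) = 0 := by
            unfold DV
            apply Matrix.det_zero_of_row_eq
              (i := Fin.succ (Fin.castSucc (Fin.last q')))
              (j := Fin.succ (Fin.last (q' + 1)))
              (fun hh => ((Fin.castSucc_lt_last (Fin.last q')).ne)
                (Fin.succ_injective _ hh))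
            funext b
            simp only [Matrix.of_apply, Fin.cases_succ,
              if_neg ((Fin.castSucc_lt_last (Fin.last q')).ne), if_pos rfl]
            congr 2
            simp only [Jrow, Fin.snoc_castSucc, Fin.snoc_last]
            have hsum0 : ∑ t, c t = 0 := by omega
            rw [hc0 (Fin.last q'), hsum0]
            omega
          rw [hDV0, mul_zero]

end Main

/-- Let `K` be a field of characteristic 0 and let `q ≥ 1` and
`2 ≤ i_1 < i_2 < … < i_q` be integers (here the `q` indices are `i 0, …, i (Fin.last q')`
with `q = q' + 1 ≥ 1`).  Then the alternating `(q+1)`-linear form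
`ω = ω(e^{i_1} ∧ … ∧ e^{i_q} ∧ e^{i_q + 1}) = Σ_{l ≥ 0} (-1)^l D₁^l(e^{i_1} ∧ … ∧ e^{i_q}) ∧ e^{i_q+1+l}`
on `m0` (the Lie algebra with basis `e 1, e 2, …` and only nonzero brackets
`⁅e 1, e i⁆ = e (i+1)`, `i ≥ 2`) is a cocycle with trivial coefficients: `dω = 0`. -/
theorem omega_cocycle_trivial_coeffs (K g : Type*) [Field K] [CharZero K]
    [LieRing g] [LieAlgebra K g]
    (e : Module.Basis ℕ+ K g)
    (hm0a : ∀ i : ℕ+, 2 ≤ i → ⁅e 1, e i⁆ = e (i + 1))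
    (hm0b : ∀ i j : ℕ+, 2 ≤ i → 2 ≤ j → ⁅e i, e j⁆ = 0)
    (q' : ℕ) (i : Fin (q' + 1) → ℕ+) (h2 : 2 ≤ i 0) (hmono : StrictMono i) :
    ∀ X : Fin (q' + 3) → g, lieCochainDiffTriv (omegaForm e i) X = 0 := by
  intro X
  rw [step_pk e hm0a hm0b i X, step_fold e i X, step_telescope e i X h2 hmono]
end

section
/- Let K be a field of characteristic 0, and let j ≥ 2 and s ≥ 0 be integers. The alternating bilinear map Ψ_{j,s} : m0 × m0 → m0 defined on basis vectors by Ψ_{j,s}(e_k, e_m) = (−1)^{j−k} binom(m−j−1, j−k) e_{k+m+s} whenever 2 ≤ k ≤ j < m and k + m ≥ 2j + 1, and Ψ_{j,s}(e_k, e_m) = 0 for all other pairs k < m (in particular Ψ_{j,s}(e_1, x) = 0 for all x), is a 2-cocycle of m0 with coefficients in the adjoint representation: dΨ_{j,s} = 0. Moreover Ψ_{j,s}(e_j, e_{j+1}) = e_{2j+1+s} and Ψ_{j,s}(e_k, e_{k+1}) = 0 for all k ≥ 2 with k ≠ j. -/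
set_option linter.unusedSectionVars false

/-- The basis vector `e n`, extended by `0` to the junk index `n = 0`. -/
noncomputable def E {K g : Type*} [Field K] [AddCommGroup g] [Module K g]
    (e : Module.Basis ℕ+ K g) (n : ℕ) : g :=
  if h : 0 < n then e ⟨n, h⟩ else 0

/-- The value of the cocycle `Ψ_{j,s}` on the pair of basis vectors `(e k, e m)`:
`Ψ_{j,s}(e_k, e_m) = (-1)^{j-k} C(m-j-1, j-k) e_{k+m+s}` for `2 ≤ k ≤ j < m` with
`k + m ≥ 2j + 1`, extended antisymmetrically, and `0` on all other pairs. -/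
noncomputable def psiVal {K g : Type*} [Field K] [AddCommGroup g] [Module K g]
    (e : Module.Basis ℕ+ K g) (j s : ℕ) (k m : ℕ+) : g :=
  if 2 ≤ (k : ℕ) ∧ (k : ℕ) ≤ j ∧ j < (m : ℕ) ∧ 2 * j + 1 ≤ (k : ℕ) + (m : ℕ) then
    ((-1 : K) ^ (j - (k : ℕ)) * (((m : ℕ) - j - 1).choose (j - (k : ℕ)) : K)) •
      E e ((k : ℕ) + (m : ℕ) + s)
  else if 2 ≤ (m : ℕ) ∧ (m : ℕ) ≤ j ∧ j < (k : ℕ) ∧ 2 * j + 1 ≤ (k : ℕ) + (m : ℕ) then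
    -(((-1 : K) ^ (j - (m : ℕ)) * (((k : ℕ) - j - 1).choose (j - (m : ℕ)) : K)) •
      E e ((k : ℕ) + (m : ℕ) + s))
  else 0

/-- The bilinear map `Ψ_{j,s} : g × g → g`, extended from its values `psiVal` on pairs of
basis vectors. -/
noncomputable def Psi {K g : Type*} [Field K] [AddCommGroup g] [Module K g]
    (e : Module.Basis ℕ+ K g) (j s : ℕ) : g →ₗ[K] g →ₗ[K] g :=
  Module.Basis.constr e K fun k => Module.Basis.constr e K fun m => psiVal e j s k m

/-! ### Auxiliary machinery -/

/-- The scalar coefficient of `Ψ_{j,s}(e_k, e_m)` (for `k ≤ m`). -/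
noncomputable def psiCoeff (K : Type*) [Field K] (j k m : ℕ) : K :=
  if 2 ≤ k ∧ k ≤ j ∧ j < m ∧ 2 * j + 1 ≤ k + m then
    (-1 : K) ^ (j - k) * ((m - j - 1).choose (j - k) : K)
  else 0

/-- Pascal-style identity for the coefficients. -/
lemma psiCoeff_pascal (K : Type*) [Field K] [CharZero K] (j b c : ℕ)
    (hb : 2 ≤ b) (hbc : b < c) :
    psiCoeff K j b c = psiCoeff K j (b+1) c + psiCoeff K j b (c+1) := by
  unfold psiCoeff
  split_ifs
  all_goals try (exfalso; omega)
  · -- all three conditions hold: genuine Pascal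
    obtain ⟨p, hp⟩ : ∃ p, j - b = p + 1 := ⟨j - b - 1, by omega⟩
    have e1 : j - (b + 1) = p := by omega
    have e2 : c + 1 - j - 1 = (c - j - 1) + 1 := by omega
    rw [hp, e1, e2, Nat.choose_succ_succ' (c - j - 1) p]
    push_cast
    ring
  · -- j = b case
    have hjb : j = b := by omega
    subst hjb
    simp
  · -- b + c = 2j case
    obtain ⟨p, hp⟩ : ∃ p, j - b = p + 1 := ⟨j - b - 1, by omega⟩
    have e1 : j - (b + 1) = p := by omega
    have e2 : c - j - 1 = p := by omega
    have e3 : c + 1 - j - 1 = p + 1 := by omega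
    rw [hp, e1, e2, e3, Nat.choose_self, Nat.choose_self, pow_succ]
    push_cast
    ring
  · simp

section Aux

variable {K g : Type*} [Field K] [CharZero K] [LieRing g] [LieAlgebra K g]
variable (e : Module.Basis ℕ+ K g)

lemma psiVal_of_le (j s : ℕ) (k m : ℕ+) (h : (k : ℕ) ≤ (m : ℕ)) :
    psiVal e j s k m = psiCoeff K j (k : ℕ) (m : ℕ) • E e ((k : ℕ) + (m : ℕ) + s) := by
  unfold psiVal psiCoeff
  split_ifs with h1 h2
  · rfl
  · exfalso; omega
  · simp

lemma psiVal_swap (j s : ℕ) (k m : ℕ+) :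
    psiVal e j s m k = -psiVal e j s k m := by
  unfold psiVal
  rw [show (m : ℕ) + (k : ℕ) = (k : ℕ) + (m : ℕ) from Nat.add_comm _ _]
  split_ifs with h1 h2
  · exfalso; omega
  · rw [neg_neg]
  · rfl
  · simp

lemma psiVal_diag (j s : ℕ) (k : ℕ+) : psiVal e j s k k = 0 := by
  unfold psiVal
  rw [if_neg (by omega), if_neg (by omega)]

lemma psiVal_one (j s : ℕ) (hj : 2 ≤ j) (m : ℕ+) : psiVal e j s 1 m = 0 := by
  unfold psiVal
  simp only [PNat.one_coe]
  simp only [show ¬ (2 ≤ 1) from by omega, show ¬ (j < 1) from by omega, false_and, and_false,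
    ↓reduceIte]

lemma Psi_apply (j s : ℕ) (k m : ℕ+) :
    Psi e j s (e k) (e m) = psiVal e j s k m := by
  rw [Psi, Module.Basis.constr_basis, Module.Basis.constr_basis]

lemma E_eq (n : ℕ) (h : 0 < n) : E e n = e ⟨n, h⟩ := by
  rw [E, dif_pos h]

/-- The bracket as a bilinear map. -/
noncomputable def brkt (K g : Type*) [Field K] [LieRing g] [LieAlgebra K g] :
    g →ₗ[K] g →ₗ[K] g :=
  LinearMap.mk₂ K (fun x y => ⁅x, y⁆) add_lie smul_lie lie_add lie_smul

/-- The Chevalley–Eilenberg differential of `Ψ`, as a trilinear map. -/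
noncomputable def dPsi (K g : Type*) [Field K] [LieRing g] [LieAlgebra K g]
    (e : Module.Basis ℕ+ K g) (j s : ℕ) : g →ₗ[K] g →ₗ[K] g →ₗ[K] g :=
  ((LinearMap.llcomp K g g g).comp (brkt K g)).compl₂ (Psi e j s)
    - (((LinearMap.llcomp K g g g).comp (brkt K g)).compl₂ (Psi e j s)).flip
    + (Psi e j s).compr₂ (brkt K g).flip
    - (brkt K g).compr₂ (Psi e j s)
    + LinearMap.lflip.toLinearMap ∘ₗ ((brkt K g).compr₂ (Psi e j s))
    - (LinearMap.lflip.toLinearMap ∘ₗ ((brkt K g).compr₂ (Psi e j s))).flip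

lemma dPsi_apply (j s : ℕ) (x y z : g) :
    dPsi K g e j s x y z =
      ⁅x, Psi e j s y z⁆ - ⁅y, Psi e j s x z⁆ + ⁅z, Psi e j s x y⁆
        - Psi e j s ⁅x, y⁆ z + Psi e j s ⁅x, z⁆ y - Psi e j s ⁅y, z⁆ x := by
  simp only [dPsi, brkt, LinearMap.sub_apply, LinearMap.add_apply, LinearMap.flip_apply,
    LinearMap.compl₂_apply, LinearMap.compr₂_apply, LinearMap.comp_apply,
    LinearMap.llcomp_apply, LinearEquiv.coe_coe, LinearMap.lflip_apply, LinearMap.mk₂_apply]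

end Aux

/-- Let `K` be a field of characteristic 0 and `j ≥ 2`, `s ≥ 0` integers.
On `m0` (a Lie algebra with basis `e 1, e 2, …` and only nonzero brackets
`⁅e 1, e i⁆ = e (i+1)`, `i ≥ 2`), the alternating bilinear map `Ψ_{j,s}` defined on basis
vectors by `Ψ_{j,s}(e_k, e_m) = (-1)^{j-k} C(m-j-1, j-k) e_{k+m+s}` for
`2 ≤ k ≤ j < m`, `k + m ≥ 2j + 1`, and `0` on all other pairs `k < m` (in particular
`Ψ_{j,s}(e_1, x) = 0` for all `x`), is a 2-cocycle with coefficients in the adjoint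
representation: `dΨ_{j,s} = 0`.  Moreover `Ψ_{j,s}(e_j, e_{j+1}) = e_{2j+1+s}` and
`Ψ_{j,s}(e_k, e_{k+1}) = 0` for all `k ≥ 2`, `k ≠ j`. -/
theorem psi_js_is_two_cocycle (K g : Type*) [Field K] [CharZero K]
    [LieRing g] [LieAlgebra K g]
    (e : Module.Basis ℕ+ K g)
    (hm0a : ∀ i : ℕ+, 2 ≤ i → ⁅e 1, e i⁆ = e (i + 1))
    (hm0b : ∀ i j : ℕ+, 2 ≤ i → 2 ≤ j → ⁅e i, e j⁆ = 0)
    (j s : ℕ) (hj : 2 ≤ j) :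
    (∀ x y : g, Psi e j s x y = -Psi e j s y x) ∧
    (∀ x : g, Psi e j s (e 1) x = 0) ∧
    (∀ x y z : g,
      ⁅x, Psi e j s y z⁆ - ⁅y, Psi e j s x z⁆ + ⁅z, Psi e j s x y⁆
        - Psi e j s ⁅x, y⁆ z + Psi e j s ⁅x, z⁆ y - Psi e j s ⁅y, z⁆ x = 0) ∧
    Psi e j s (E e j) (E e (j + 1)) = E e (2 * j + 1 + s) ∧
    (∀ k : ℕ, 2 ≤ k → k ≠ j → Psi e j s (E e k) (E e (k + 1)) = 0) := by
  -- coercion helper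
  have hcoe : ∀ a : ℕ+, 2 ≤ (a : ℕ) → (2 : ℕ+) ≤ a := by
    intro a ha; exact_mod_cast ha
  have hne1 : ∀ a : ℕ+, a ≠ 1 → 2 ≤ (a : ℕ) := by
    intro a ha
    have h0 : 0 < (a : ℕ) := a.pos
    have h1 : (a : ℕ) ≠ 1 := by
      intro h; exact ha (PNat.coe_injective (by simpa using h))
    omega
  -- bracket with e 1 raises the index
  have hbr1 : ∀ n : ℕ, 2 ≤ n → ⁅e 1, E e n⁆ = E e (n + 1) := by
    intro n hn
    rw [E_eq e n (by omega), E_eq e (n+1) (by omega), hm0a ⟨n, by omega⟩ (hcoe _ hn)]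
    rfl
  -- brackets among high basis vectors vanish
  have hbr0 : ∀ (a : ℕ+), 2 ≤ (a : ℕ) → ∀ n : ℕ, 2 ≤ n → ⁅e a, E e n⁆ = 0 := by
    intro a ha n hn
    rw [E_eq e n (by omega)]
    exact hm0b a ⟨n, by omega⟩ (hcoe _ ha) (hcoe _ hn)
  have hliePsi : ∀ (a : ℕ+), 2 ≤ (a : ℕ) → ∀ k m : ℕ+, ⁅e a, psiVal e j s k m⁆ = 0 := by
    intro a ha k m
    unfold psiVal
    split_ifs with h1 h2
    · rw [lie_smul, hbr0 a ha _ (by omega), smul_zero]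
    · rw [lie_neg, lie_smul, hbr0 a ha _ (by omega), smul_zero, neg_zero]
    · exact lie_zero _
  -- the key cocycle identity, strict case
  have key_lt : ∀ b c : ℕ+, 2 ≤ (b : ℕ) → (b : ℕ) < (c : ℕ) →
      ⁅e 1, psiVal e j s b c⁆ = psiVal e j s (b+1) c + psiVal e j s b (c+1) := by
    intro b c hb hbc
    have cb1 : ((b + 1 : ℕ+) : ℕ) = (b : ℕ) + 1 := by
      rw [PNat.add_coe, PNat.one_coe]
    have cc1 : ((c + 1 : ℕ+) : ℕ) = (c : ℕ) + 1 := by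
      rw [PNat.add_coe, PNat.one_coe]
    rw [psiVal_of_le e j s b c (le_of_lt hbc),
        psiVal_of_le e j s (b+1) c (by omega),
        psiVal_of_le e j s b (c+1) (by omega)]
    rw [cb1, cc1]
    rw [show (b : ℕ) + 1 + (c : ℕ) + s = ((b : ℕ) + (c : ℕ) + s) + 1 from by omega,
        show (b : ℕ) + ((c : ℕ) + 1) + s = ((b : ℕ) + (c : ℕ) + s) + 1 from by omega,
        lie_smul, hbr1 _ (by omega), ← add_smul]
    congr 1
    exact psiCoeff_pascal K j (b : ℕ) (c : ℕ) hb hbc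
  -- the key cocycle identity, general case
  have key : ∀ b c : ℕ+, 2 ≤ (b : ℕ) → 2 ≤ (c : ℕ) →
      ⁅e 1, psiVal e j s b c⁆ = psiVal e j s (b+1) c + psiVal e j s b (c+1) := by
    intro b c hb hc
    rcases lt_trichotomy (b : ℕ) (c : ℕ) with h | h | h
    · exact key_lt b c hb h
    · have : b = c := PNat.coe_injective h
      subst this
      rw [psiVal_diag, lie_zero, psiVal_swap e j s b (b+1), neg_add_cancel]
    · rw [psiVal_swap e j s c b, lie_neg, key_lt c b hc h, psiVal_swap e j s b (c+1),
        psiVal_swap e j s (b+1) c]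
      abel
  -- antisymmetry
  have hanti : ∀ x y : g, Psi e j s x y = -Psi e j s y x := by
    have hPanti : Psi e j s = -(Psi e j s).flip := by
      apply Module.Basis.ext e; intro k
      apply Module.Basis.ext e; intro m
      simp only [LinearMap.neg_apply, LinearMap.flip_apply]
      rw [Psi_apply, Psi_apply, psiVal_swap e j s k m, neg_neg]
    intro x y
    conv_lhs => rw [hPanti]
    simp only [LinearMap.neg_apply, LinearMap.flip_apply]
  -- Psi (e 1) = 0
  have hone : ∀ x : g, Psi e j s (e 1) x = 0 := by
    have h0 : Psi e j s (e 1) = 0 := by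
      apply Module.Basis.ext e; intro m
      rw [Psi_apply, psiVal_one e j s hj m, LinearMap.zero_apply]
    intro x; rw [h0, LinearMap.zero_apply]
  -- swap identities for dPsi
  have hswap1 : ∀ x y z : g, dPsi K g e j s x y z = -dPsi K g e j s y x z := by
    intro x y z
    rw [dPsi_apply, dPsi_apply, hanti y x, show ⁅y, x⁆ = -⁅x, y⁆ from (lie_skew y x).symm]
    simp only [map_neg, LinearMap.neg_apply, lie_neg]
    abel
  have hswap2 : ∀ x y z : g, dPsi K g e j s x y z = -dPsi K g e j s x z y := by
    intro x y z
    rw [dPsi_apply, dPsi_apply, hanti z y, show ⁅z, y⁆ = -⁅y, z⁆ from (lie_skew z y).symm]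
    simp only [map_neg, LinearMap.neg_apply, lie_neg]
    abel
  have hself : ∀ x z : g, dPsi K g e j s x x z = 0 := by
    intro x z
    have h := hswap1 x x z
    have h2 : (2 : K) • dPsi K g e j s x x z = 0 := by
      rw [two_smul]
      nth_rewrite 1 [h]
      exact neg_add_cancel _
    have h3 := smul_eq_zero.mp h2
    rcases h3 with h3 | h3
    · exact absurd h3 two_ne_zero
    · exact h3
  -- claim A : dPsi vanishes on (e 1, e b, e c)
  have claimA : ∀ b c : ℕ+, dPsi K g e j s (e 1) (e b) (e c) = 0 := by
    intro b c
    by_cases hb : b = 1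
    · subst hb; exact hself _ _
    by_cases hc : c = 1
    · subst hc
      rw [hswap2, hself, neg_zero]
    have hb2 := hne1 b hb
    have hc2 := hne1 c hc
    rw [dPsi_apply, hm0a b (hcoe _ hb2), hm0a c (hcoe _ hc2), hm0b b c (hcoe _ hb2) (hcoe _ hc2),
      Psi_apply, Psi_apply e j s 1 c, Psi_apply e j s 1 b, Psi_apply, Psi_apply,
      psiVal_one e j s hj c, psiVal_one e j s hj b,
      key b c hb2 hc2, psiVal_swap e j s b (c+1)]
    simp only [lie_zero, map_zero, LinearMap.zero_apply]
    abel
  -- dPsi vanishes on all basis triples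
  have hbasis : ∀ a b c : ℕ+, dPsi K g e j s (e a) (e b) (e c) = 0 := by
    intro a b c
    by_cases ha : a = 1
    · subst ha; exact claimA b c
    by_cases hb : b = 1
    · subst hb
      rw [hswap1, claimA a c, neg_zero]
    by_cases hc : c = 1
    · subst hc
      rw [hswap2, hswap1, claimA a b, neg_zero, neg_zero]
    have ha2 := hne1 a ha
    have hb2 := hne1 b hb
    have hc2 := hne1 c hc
    rw [dPsi_apply, hm0b a b (hcoe _ ha2) (hcoe _ hb2), hm0b a c (hcoe _ ha2) (hcoe _ hc2),
      hm0b b c (hcoe _ hb2) (hcoe _ hc2),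
      Psi_apply, Psi_apply, Psi_apply,
      hliePsi a ha2 b c, hliePsi b hb2 a c, hliePsi c hc2 a b]
    simp
  -- dPsi = 0 as a trilinear map
  have hdPsi : dPsi K g e j s = 0 := by
    apply Module.Basis.ext e; intro a
    apply Module.Basis.ext e; intro b
    apply Module.Basis.ext e; intro c
    simp only [LinearMap.zero_apply]
    exact hbasis a b c
  refine ⟨hanti, hone, ?_, ?_, ?_⟩
  · intro x y z
    have h := hdPsi
    have h2 : dPsi K g e j s x y z = 0 := by rw [h]; simp
    rw [dPsi_apply] at h2
    exact h2
  · -- Psi (E e j) (E e (j+1)) = E e (2j+1+s)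
    rw [E_eq e j (by omega), E_eq e (j+1) (by omega)]
    erw [Psi_apply]
    unfold psiVal
    rw [if_pos]
    · show ((-1 : K) ^ (j - j) * (((j + 1) - j - 1).choose (j - j) : K)) • E e (j + (j+1) + s) = _
      rw [Nat.sub_self, show j + 1 - j - 1 = 0 from by omega]
      norm_num
      rw [show j + (j + 1) + s = 2 * j + 1 + s from by omega]
    · show 2 ≤ j ∧ j ≤ j ∧ j < j + 1 ∧ 2 * j + 1 ≤ j + (j + 1)
      omega
  · intro k hk hkj
    rw [E_eq e k (by omega), E_eq e (k+1) (by omega)]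
    erw [Psi_apply]
    unfold psiVal
    rw [if_neg, if_neg]
    · show ¬(2 ≤ k + 1 ∧ k + 1 ≤ j ∧ j < k ∧ 2 * j + 1 ≤ k + (k + 1))
      omega
    · show ¬(2 ≤ k ∧ k ≤ j ∧ j < k + 1 ∧ 2 * j + 1 ≤ k + (k + 1))
      omega
end

section
/- Let K be a field of characteristic 0 and let j ≥ 2, s ≥ 0 be integers. Suppose Φ : m0 × m0 → m0 is an alternating bilinear map such that: (i) Φ(e_1, x) = 0 for all x; (ii) Φ is homogeneous of weight s, i.e. Φ(e_a, e_b) ∈ span{e_{a+b+s}} for all a, b ≥ 2; (iii) dΦ = 0 (Φ is a 2-cocycle with adjoint coefficients); (iv) Φ(e_j, e_{j+1}) = e_{2j+1+s} and Φ(e_k, e_{k+1}) = 0 for all k ≥ 2 with k ≠ j. Then Φ = Ψ_{j,s}, i.e. Φ(e_k, e_m) = (−1)^{j−k} binom(m−j−1, j−k) e_{k+m+s} for 2 ≤ k ≤ j < m with k + m ≥ 2j + 1, and Φ(e_k, e_m) = 0 for all other pairs k < m. -/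
/-- The scalar coefficient of `Ψ_{j,s}(e_k, e_m)` for `k < m`. -/
noncomputable def Fc (K : Type*) [Field K] (j k m : ℕ) : K :=
  if 2 ≤ k ∧ k ≤ j ∧ j < m ∧ 2 * j + 1 ≤ k + m then
    (-1 : K) ^ (j - k) * ((m - j - 1).choose (j - k) : K)
  else 0

/-- The coefficients `Fc` satisfy the Pascal-type recurrence forced by the cocycle identity. -/
lemma Fc_rec (K : Type*) [Field K] (j k m : ℕ) (hk : 2 ≤ k) (hkm : k + 1 ≤ m) :
    Fc K j k (m + 1) = Fc K j k m - Fc K j (k + 1) m := by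
  simp only [Fc]
  split_ifs with hA hB hC hC2 hB2 hC3 hC4
  · have h1 : j - k = (j - (k + 1)) + 1 := by omega
    have h2 : m + 1 - j - 1 = (m - j - 1) + 1 := by omega
    rw [h1, h2, Nat.choose_succ_succ]
    push_cast
    ring
  · have h0 : j - k = 0 := by omega
    simp [h0]
  · have h1 : m + 1 - j - 1 = (j - (k + 1)) + 1 := by omega
    have h2 : m - j - 1 = j - (k + 1) := by omega
    have h3 : j - k = (j - (k + 1)) + 1 := by omega
    rw [h1, h2, h3, Nat.choose_self, Nat.choose_self]
    push_cast
    ring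
  · exfalso; omega
  · exfalso; omega
  · exfalso; omega
  · exfalso; omega
  · simp

/-- Let `K` be a field of characteristic 0 and `j ≥ 2`, `s ≥ 0` integers.
Suppose `Φ : m0 × m0 → m0` is an alternating bilinear map on `m0` (a Lie algebra with
basis `e 1, e 2, …` and only nonzero brackets `⁅e 1, e i⁆ = e (i+1)`, `i ≥ 2`) such that:
(i) `Φ(e 1, x) = 0` for all `x`;
(ii) `Φ` is homogeneous of weight `s`: `Φ(e_a, e_b) ∈ span {e_{a+b+s}}` for all `a, b ≥ 2`;
(iii) `dΦ = 0` (`Φ` is a 2-cocycle with adjoint coefficients);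
(iv) `Φ(e_j, e_{j+1}) = e_{2j+1+s}` and `Φ(e_k, e_{k+1}) = 0` for all `k ≥ 2`, `k ≠ j`.
Then `Φ = Ψ_{j,s}`. -/
theorem psi_js_unique (K g : Type*) [Field K] [CharZero K]
    [LieRing g] [LieAlgebra K g]
    (e : Module.Basis ℕ+ K g)
    (hm0a : ∀ i : ℕ+, 2 ≤ i → ⁅e 1, e i⁆ = e (i + 1))
    (hm0b : ∀ i j : ℕ+, 2 ≤ i → 2 ≤ j → ⁅e i, e j⁆ = 0)
    (j s : ℕ) (hj : 2 ≤ j)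
    (Φ : g →ₗ[K] g →ₗ[K] g)
    (halt : ∀ x : g, Φ x x = 0)
    (h1 : ∀ x : g, Φ (e 1) x = 0)
    (hw : ∀ a b : ℕ+, 2 ≤ a → 2 ≤ b →
      Φ (e a) (e b) ∈ Submodule.span K {E e ((a : ℕ) + (b : ℕ) + s)})
    (hcocycle : ∀ x y z : g,
      ⁅x, Φ y z⁆ - ⁅y, Φ x z⁆ + ⁅z, Φ x y⁆ - Φ ⁅x, y⁆ z + Φ ⁅x, z⁆ y - Φ ⁅y, z⁆ x = 0)
    (hval₁ : Φ (E e j) (E e (j + 1)) = E e (2 * j + 1 + s))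
    (hval₂ : ∀ k : ℕ, 2 ≤ k → k ≠ j → Φ (E e k) (E e (k + 1)) = 0) :
    Φ = Psi e j s := by
  have hEe : ∀ n : ℕ+, E e (n : ℕ) = e n := by
    intro n
    rw [E, dif_pos n.pos]
    rfl
  have hanti : ∀ x y : g, Φ x y = -Φ y x := by
    intro x y
    have h := halt (x + y)
    rw [map_add] at h
    simp only [LinearMap.add_apply, map_add, halt, zero_add, add_zero] at h
    exact eq_neg_of_add_eq_zero_right h
  have hbr1 : ∀ n : ℕ, 2 ≤ n → ⁅e 1, E e n⁆ = E e (n + 1) := by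
    intro n hn
    have h0 : 0 < n := by omega
    rw [E, E, dif_pos h0, dif_pos (by omega : 0 < n + 1)]
    have h2 : (2 : ℕ+) ≤ ⟨n, h0⟩ := by
      exact (PNat.coe_le_coe _ _).mp hn
    rw [hm0a ⟨n, h0⟩ h2]
    congr 1
  have hzero : ∀ k m : ℕ, 2 ≤ k → 2 ≤ m → ⁅E e k, E e m⁆ = 0 := by
    intro k m hk hm
    rw [E, E, dif_pos (by omega : 0 < k), dif_pos (by omega : 0 < m)]
    exact hm0b _ _ (by exact (PNat.coe_le_coe _ _).mp hk)
      (by exact (PNat.coe_le_coe _ _).mp hm)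
  have hrec : ∀ k m : ℕ, 2 ≤ k → 2 ≤ m →
      Φ (E e k) (E e (m + 1)) = ⁅e 1, Φ (E e k) (E e m)⁆ - Φ (E e (k + 1)) (E e m) := by
    intro k m hk hm
    have hc := hcocycle (e 1) (E e k) (E e m)
    rw [h1 (E e m), h1 (E e k), hbr1 k hk, hbr1 m hm, hzero k m hk hm, map_zero] at hc
    simp only [lie_zero, LinearMap.zero_apply, sub_zero, add_zero] at hc
    rw [hanti (E e (m + 1)) (E e k)] at hc
    have h2 : (⁅e 1, Φ (E e k) (E e m)⁆ - Φ (E e (k + 1)) (E e m))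
        - Φ (E e k) (E e (m + 1)) = 0 := by rw [← hc]; abel
    exact (sub_eq_zero.mp h2).symm
  have main : ∀ d k m : ℕ, 2 ≤ k → m = k + d + 1 →
      Φ (E e k) (E e m) = Fc K j k m • E e (k + m + s) := by
    intro d
    induction d using Nat.strong_induction_on with
    | _ d ih =>
      intro k m hk hm
      rcases d with _ | d'
      · obtain rfl : m = k + 1 := by omega
        by_cases hkj : k = j
        · have hF : Fc K j k (k + 1) = 1 := by
            rw [Fc, if_pos (by omega)]
            have h0 : j - k = 0 := by omega
            have h0' : k + 1 - j - 1 = 0 := by omega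
            rw [h0, h0']
            simp
          rw [hF, one_smul,
            show k + (k + 1) + s = 2 * j + 1 + s from by omega, hkj]
          exact hval₁
        · rw [hval₂ k hk hkj,
            show Fc K j k (k + 1) = 0 from by rw [Fc, if_neg (by omega)], zero_smul]
      · obtain rfl : m = k + d' + 1 + 1 := by omega
        have hr := hrec k (k + d' + 1) hk (by omega)
        rw [ih d' (by omega) k (k + d' + 1) hk rfl] at hr
        have ht2 : Φ (E e (k + 1)) (E e (k + d' + 1))
            = Fc K j (k + 1) (k + d' + 1) • E e ((k + 1) + (k + d' + 1) + s) := by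
          rcases d' with _ | d''
          · rw [show Fc K j (k + 1) (k + 0 + 1) = 0 from by rw [Fc, if_neg (by omega)],
              zero_smul]
            exact halt _
          · exact ih d'' (by omega) (k + 1) (k + (d'' + 1) + 1) (by omega) (by omega)
        rw [ht2, lie_smul, hbr1 (k + (k + d' + 1) + s) (by omega)] at hr
        rw [hr, Fc_rec K j k (k + d' + 1) hk (by omega), sub_smul,
          show k + (k + d' + 1) + s + 1 = k + (k + d' + 1 + 1) + s from by omega,
          show (k + 1) + (k + d' + 1) + s = k + (k + d' + 1 + 1) + s from by omega]
  refine Module.Basis.ext e fun k => Module.Basis.ext e fun m => ?_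
  have hPsi : Psi e j s (e k) (e m) = psiVal e j s k m := by
    simp [Psi, Module.Basis.constr_basis]
  rw [hPsi]
  rcases lt_trichotomy ((k : ℕ)) ((m : ℕ)) with hlt | heq | hgt
  · by_cases hk1 : (k : ℕ) = 1
    · have hk1' : k = 1 := by
        apply PNat.coe_injective; exact_mod_cast hk1
      rw [psiVal, if_neg (by omega), if_neg (by omega), hk1']
      exact h1 (e m)
    · have hkpos : 1 ≤ (k : ℕ) := k.property
      have hk2 : 2 ≤ (k : ℕ) := by omega
      have hmain := main ((m : ℕ) - (k : ℕ) - 1) (k : ℕ) (m : ℕ) hk2 (by omega)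
      rw [hEe, hEe] at hmain
      rw [hmain]
      simp only [psiVal, Fc]
      split_ifs with hA hB
      · rfl
      · exfalso; omega
      · simp
  · obtain rfl : k = m := PNat.coe_injective heq
    rw [psiVal, if_neg (by omega), if_neg (by omega)]
    exact halt (e k)
  · rw [hanti]
    by_cases hm1 : (m : ℕ) = 1
    · rw [psiVal, if_neg (by omega), if_neg (by omega)]
      have hm1' : m = 1 := by
        apply PNat.coe_injective; exact_mod_cast hm1
      rw [hm1', h1 (e k), neg_zero]
    · have hmpos : 1 ≤ (m : ℕ) := m.property
      have hm2 : 2 ≤ (m : ℕ) := by omega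
      have hmain := main ((k : ℕ) - (m : ℕ) - 1) (m : ℕ) (k : ℕ) hm2 (by omega)
      rw [hEe, hEe] at hmain
      rw [show (m : ℕ) + (k : ℕ) + s = (k : ℕ) + (m : ℕ) + s from by omega] at hmain
      rw [hmain]
      simp only [psiVal, Fc]
      split_ifs with hA hP1 hP2 hP1' hP2'
      · exfalso; omega
      · rfl
      · exfalso; omega
      · exfalso; omega
      · exfalso; omega
      · simp
end

section
/- Let K be a field of characteristic 0, let V be the K-vector space with basis e_1, e_2, …, and let Ψ = Ψ_0 + Ψ_1 + Ψ_2 + … be an alternating bilinear map V × V → V with Ψ(e_1, x) = 0 for all x, where each homogeneous component Ψ_i satisfies Ψ_i(e_a, e_b) ∈ span{e_{a+b+i}} for a, b ≥ 2, and suppose the bracket [x, y]_Ψ = [x, y]_{m0} + Ψ(x, y) satisfies the Jacobi identity. Then for any nonzero scalars α, β ∈ K, the bracket [x, y]_{Ψ̃} = [x, y]_{m0} + Ψ̃(x, y) with Ψ̃ = β Ψ_0 + βα Ψ_1 + βα² Ψ_2 + … + βα^i Ψ_i + … also satisfies the Jacobi identity, and the two resulting Lie algebras (V, [,]_Ψ)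 and (V, [,]_{Ψ̃}) are isomorphic. -/
set_option maxHeartbeats 1000000 in
/-- **Proposition isom_lemma.** -/
theorem scaled_deformation_isomorphic (K g : Type*) [Field K] [CharZero K]
    [LieRing g] [LieAlgebra K g]
    (e : Module.Basis ℕ+ K g)
    (hm0a : ∀ i : ℕ+, 2 ≤ i → ⁅e 1, e i⁆ = e (i + 1))
    (hm0b : ∀ i j : ℕ+, 2 ≤ i → 2 ≤ j → ⁅e i, e j⁆ = 0)
    (Ψc : ℕ → (g →ₗ[K] g →ₗ[K] g))
    (haltc : ∀ (i : ℕ) (x : g), Ψc i x x = 0)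
    (h1c : ∀ (i : ℕ) (x : g), Ψc i (e 1) x = 0)
    (hwc : ∀ (i : ℕ) (a b : ℕ+), 2 ≤ a → 2 ≤ b →
      Ψc i (e a) (e b) ∈ Submodule.span K {E e ((a : ℕ) + (b : ℕ) + i)})
    (hfin : ∀ x y : g, (Function.support fun i : ℕ => Ψc i x y).Finite)
    (Ψ : g →ₗ[K] g →ₗ[K] g)
    (hΨ : ∀ x y : g, Ψ x y = ∑ᶠ i : ℕ, Ψc i x y)
    (hJac : ∀ x y z : g,
      (⁅⁅x, y⁆ + Ψ x y, z⁆ + Ψ (⁅x, y⁆ + Ψ x y) z) +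
      (⁅⁅y, z⁆ + Ψ y z, x⁆ + Ψ (⁅y, z⁆ + Ψ y z) x) +
      (⁅⁅z, x⁆ + Ψ z x, y⁆ + Ψ (⁅z, x⁆ + Ψ z x) y) = 0)
    (α β : K) (hα : α ≠ 0) (hβ : β ≠ 0) :
    ∃ Ψt : g →ₗ[K] g →ₗ[K] g,
      (∀ x y : g, Ψt x y = ∑ᶠ i : ℕ, (β * α ^ i) • Ψc i x y) ∧
      (∀ x y z : g,
        (⁅⁅x, y⁆ + Ψt x y, z⁆ + Ψt (⁅x, y⁆ + Ψt x y) z) +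
        (⁅⁅y, z⁆ + Ψt y z, x⁆ + Ψt (⁅y, z⁆ + Ψt y z) x) +
        (⁅⁅z, x⁆ + Ψt z x, y⁆ + Ψt (⁅z, x⁆ + Ψt z x) y) = 0) ∧
      (∃ f : g ≃ₗ[K] g, ∀ x y : g,
        f (⁅x, y⁆ + Ψ x y) = ⁅f x, f y⁆ + Ψt (f x) (f y)) := by
  classical
  -- finiteness of scaled supports
  have hfinc : ∀ (c : ℕ → K) (x y : g),
      (Function.support fun i : ℕ => c i • Ψc i x y).Finite := by
    intro c x y
    refine (hfin x y).subset ?_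
    intro i hi
    simp only [Function.mem_support] at hi ⊢
    intro h
    exact hi (by rw [h, smul_zero])
  -- the scaled deformation
  set Ψt : g →ₗ[K] g →ₗ[K] g :=
    { toFun := fun x =>
        { toFun := fun y => ∑ᶠ i : ℕ, (β * α ^ i) • Ψc i x y
          map_add' := by
            intro y z
            rw [← finsum_add_distrib (hfinc _ x y) (hfinc _ x z)]
            exact finsum_congr fun i => by rw [map_add, smul_add]
          map_smul' := by
            intro c y
            simp only [RingHom.id_apply]
            rw [smul_finsum]
            exact finsum_congr fun i => by rw [map_smul, smul_comm] }
      map_add' := by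
        intro x x'
        ext y
        simp only [LinearMap.coe_mk, AddHom.coe_mk, LinearMap.add_apply]
        rw [← finsum_add_distrib (hfinc _ x y) (hfinc _ x' y)]
        exact finsum_congr fun i => by rw [map_add, LinearMap.add_apply, smul_add]
      map_smul' := by
        intro c x
        ext y
        simp only [LinearMap.coe_mk, AddHom.coe_mk, RingHom.id_apply,
          LinearMap.smul_apply]
        rw [smul_finsum]
        exact finsum_congr fun i => by rw [map_smul, LinearMap.smul_apply, smul_comm] }
    with hΨtdef
  have hΨt : ∀ x y : g, Ψt x y = ∑ᶠ i : ℕ, (β * α ^ i) • Ψc i x y := fun x y => rfl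
  -- alternation / antisymmetry
  have hΨalt : ∀ x : g, Ψ x x = 0 := by
    intro x; rw [hΨ]
    exact finsum_eq_zero_of_forall_eq_zero fun i => haltc i x
  have hΨtalt : ∀ x : g, Ψt x x = 0 := by
    intro x; rw [hΨt]
    exact finsum_eq_zero_of_forall_eq_zero fun i => by rw [haltc, smul_zero]
  have antisym : ∀ (B : g →ₗ[K] g →ₗ[K] g), (∀ x, B x x = 0) →
      ∀ x y : g, B x y = - B y x := by
    intro B hB x y
    have h := hB (x + y)
    simp only [map_add, LinearMap.add_apply, hB x, hB y] at h
    linear_combination (norm := abel) h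
  have hΨ1 : ∀ x : g, Ψ (e 1) x = 0 := by
    intro x; rw [hΨ]
    exact finsum_eq_zero_of_forall_eq_zero fun i => h1c i x
  have hΨt1 : ∀ x : g, Ψt (e 1) x = 0 := by
    intro x; rw [hΨt]
    exact finsum_eq_zero_of_forall_eq_zero fun i => by rw [h1c, smul_zero]
  -- the diagonal scaling map
  set lam : ℕ+ → K := fun n => if n = 1 then α else β⁻¹ * α ^ (n : ℕ) with hlam
  have hlam1 : lam 1 = α := by simp [hlam]
  have hlam2 : ∀ n : ℕ+, 2 ≤ n → lam n = β⁻¹ * α ^ (n : ℕ) := by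
    intro n hn
    have : n ≠ 1 := by
      intro h; rw [h] at hn; exact absurd hn (by decide)
    simp [hlam, this]
  have hlamne : ∀ n : ℕ+, lam n ≠ 0 := by
    intro n
    by_cases h : n = 1 <;> simp [hlam, h, hα, hβ, pow_ne_zero, inv_ne_zero]
  set F : g →ₗ[K] g := e.constr K (fun n => lam n • e n) with hF
  set G : g →ₗ[K] g := e.constr K (fun n => (lam n)⁻¹ • e n) with hG
  have hFe : ∀ n : ℕ+, F (e n) = lam n • e n := fun n => e.constr_basis K _ n
  have hGe : ∀ n : ℕ+, G (e n) = (lam n)⁻¹ • e n := fun n => e.constr_basis K _ n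
  have hFG : F ∘ₗ G = LinearMap.id := by
    refine e.ext fun n => ?_
    simp [LinearMap.comp_apply, hGe, hFe, map_smul, smul_smul,
      inv_mul_cancel₀ (hlamne n)]
  have hGF : G ∘ₗ F = LinearMap.id := by
    refine e.ext fun n => ?_
    simp [LinearMap.comp_apply, hGe, hFe, map_smul, smul_smul,
      mul_inv_cancel₀ (hlamne n)]
  set f : g ≃ₗ[K] g := LinearEquiv.ofLinear F G hFG hGF with hf
  have hfe : ∀ n : ℕ+, f (e n) = lam n • e n := hFe
  -- the key equivariance
  -- pnat helper
  have hpn2 : ∀ n : ℕ+, n ≠ 1 → 2 ≤ n := by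
    intro n hn
    have h0 : 0 < (n : ℕ) := n.property
    have h1 : (n : ℕ) ≠ 1 := fun h => hn (PNat.coe_injective (by simpa using h))
    exact (by omega : (2 : ℕ) ≤ (n : ℕ))
  have hΨtsmul : ∀ (c d : K) (x y : g), Ψt (c • x) (d • y) = (c * d) • Ψt x y := by
    intro c d x y
    rw [map_smul, map_smul, LinearMap.smul_apply, smul_smul, mul_comm d c]
  -- key equivariance on basis pairs with first index 1
  have key1 : ∀ b : ℕ+, 2 ≤ b →
      f (⁅e 1, e b⁆ + Ψ (e 1) (e b)) = ⁅f (e 1), f (e b)⁆ + Ψt (f (e 1)) (f (e b)) := by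
    intro b hb2
    have hb2' : (2 : ℕ) ≤ (b : ℕ) := hb2
    rw [hΨ1, add_zero, hm0a b hb2, hfe, hfe, hfe, smul_lie, lie_smul, hm0a b hb2,
      hΨtsmul, hΨt1, smul_zero, add_zero, smul_smul]
    congr 1
    have hb1 : ((b + 1 : ℕ+) : ℕ) = (b : ℕ) + 1 := rfl
    rw [hlam2 (b + 1) (by exact (by omega : (2 : ℕ) ≤ (b : ℕ) + 1)), hlam1,
      hlam2 b hb2, hb1, pow_succ]
    ring
  have key22 : ∀ a b : ℕ+, 2 ≤ a → 2 ≤ b →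
      f (⁅e a, e b⁆ + Ψ (e a) (e b)) = ⁅f (e a), f (e b)⁆ + Ψt (f (e a)) (f (e b)) := by
    intro a b ha2 hb2
    have ha2' : (2 : ℕ) ≤ (a : ℕ) := ha2
    have hb2' : (2 : ℕ) ≤ (b : ℕ) := hb2
    rw [hm0b a b ha2 hb2, zero_add, hfe, hfe, smul_lie, lie_smul, hm0b a b ha2 hb2,
      smul_zero, smul_zero, zero_add, hΨtsmul, hΨt, smul_finsum]
    rw [hΨ (e a) (e b)]
    rw [show (f : g → g) = (f.toLinearMap.toAddMonoidHom : g → g) from rfl]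
    rw [f.toLinearMap.toAddMonoidHom.map_finsum (hfin (e a) (e b))]
    refine finsum_congr fun i => ?_
    obtain ⟨c, hc⟩ := Submodule.mem_span_singleton.mp (hwc i a b ha2 hb2)
    have hN : 0 < (a : ℕ) + (b : ℕ) + i := by omega
    have hEN : E e ((a : ℕ) + (b : ℕ) + i) = e ⟨(a : ℕ) + (b : ℕ) + i, hN⟩ := dif_pos hN
    rw [hEN] at hc
    have hlamN : lam ⟨(a : ℕ) + (b : ℕ) + i, hN⟩ = β⁻¹ * α ^ ((a : ℕ) + (b : ℕ) + i) :=
      hlam2 _ (by exact (by omega : (2 : ℕ) ≤ (a : ℕ) + (b : ℕ) + i))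
    calc f.toLinearMap.toAddMonoidHom (Ψc i (e a) (e b))
        = f (c • e ⟨(a : ℕ) + (b : ℕ) + i, hN⟩) := by rw [← hc]; rfl
      _ = c • ((β⁻¹ * α ^ ((a : ℕ) + (b : ℕ) + i)) • e ⟨(a : ℕ) + (b : ℕ) + i, hN⟩) := by
          rw [map_smul]; erw [hfe, hlamN]
      _ = (lam a * lam b) • (β * α ^ i) • (c • e ⟨(a : ℕ) + (b : ℕ) + i, hN⟩) := by
          rw [smul_smul, smul_smul, smul_smul]
          congr 1
          rw [hlam2 a ha2, hlam2 b hb2, pow_add, pow_add]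
          field_simp
      _ = (lam a * lam b) • (β * α ^ i) • Ψc i (e a) (e b) := by rw [hc]
  have keyB : ∀ a b : ℕ+,
      f (⁅e a, e b⁆ + Ψ (e a) (e b)) = ⁅f (e a), f (e b)⁆ + Ψt (f (e a)) (f (e b)) := by
    intro a b
    rcases eq_or_ne a 1 with ha | ha
    · rcases eq_or_ne b 1 with hb | hb
      · subst ha; subst hb
        rw [lie_self, hΨ1, add_zero, map_zero, lie_self, hΨtalt, add_zero]
      · subst ha; exact key1 b (hpn2 b hb)
    · rcases eq_or_ne b 1 with hb | hb
      · subst hb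
        have hx : ⁅e a, e 1⁆ + Ψ (e a) (e 1) = -(⁅e 1, e a⁆ + Ψ (e 1) (e a)) := by
          rw [← lie_skew (e 1) (e a), antisym Ψ hΨalt (e a) (e 1)]; abel
        have hy : ⁅f (e a), f (e 1)⁆ + Ψt (f (e a)) (f (e 1)) =
            -(⁅f (e 1), f (e a)⁆ + Ψt (f (e 1)) (f (e a))) := by
          rw [← lie_skew (f (e 1)) (f (e a)), antisym Ψt hΨtalt (f (e a)) (f (e 1))]; abel
        rw [hx, map_neg, hy, key1 a (hpn2 a ha)]
      · exact key22 a b (hpn2 a ha) (hpn2 b hb)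
  have key : ∀ x y : g, f (⁅x, y⁆ + Ψ x y) = ⁅f x, f y⁆ + Ψt (f x) (f y) := by
    letI : LieRing (Module.End K g) := LieRing.ofAssociativeRing
    have hBil : (((LieAlgebra.ad K g).toLinearMap + Ψ).compr₂ (f : g →ₗ[K] g)) =
        (((LieAlgebra.ad K g).toLinearMap + Ψt).compl₁₂ (f : g →ₗ[K] g) (f : g →ₗ[K] g)) := by
      refine LinearMap.ext_basis e e fun a b => ?_
      simp only [LinearMap.compr₂_apply, LinearMap.compl₁₂_apply, LinearMap.add_apply]
      have h1 : ((LieAlgebra.ad K g).toLinearMap (e a)) (e b) = ⁅e a, e b⁆ := rfl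
      have h2 : ((LieAlgebra.ad K g).toLinearMap ((f : g →ₗ[K] g) (e a)))
          ((f : g →ₗ[K] g) (e b)) = ⁅f (e a), f (e b)⁆ := rfl
      rw [h1, h2]
      exact keyB a b
    intro x y
    have := LinearMap.congr_fun₂ hBil x y
    simp only [LinearMap.compr₂_apply, LinearMap.compl₁₂_apply, LinearMap.add_apply] at this
    exact this
  refine ⟨Ψt, hΨt, ?_, f, key⟩
  -- Jacobi for Ψt
  intro x y z
  obtain ⟨x', rfl⟩ : ∃ x', f x' = x := ⟨f.symm x, f.apply_symm_apply x⟩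
  obtain ⟨y', rfl⟩ : ∃ y', f y' = y := ⟨f.symm y, f.apply_symm_apply y⟩
  obtain ⟨z', rfl⟩ : ∃ z', f z' = z := ⟨f.symm z, f.apply_symm_apply z⟩
  rw [← key x' y', ← key y' z', ← key z' x',
      ← key _ z', ← key _ x', ← key _ y', ← map_add, ← map_add, hJac, map_zero]
end
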